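/- arXiv:2410.23273 — 8 statements merged into one kernel-verified Lean document; each statement's English description precedes it below -/
import Mathlib

section
/- There exists an instance of non-centroid clustering with n = 4 agents and k = 2, with loss functions taking values in the extended nonnegative reals [0, ∞], such that for every finite α ≥ 1, no 2-clustering of the agents is in the α-core. Concretely, one may take agents {0,1,2,3} where for each i ∈ {0,1,2}: ℓ_i(S) = ∞ if S = {0,1,2} or 3 ∈ S; ℓ_i(S) = 0 if S = {i, i+1 mod 3}; ℓ_i(S) = 1 if |S| = 2 and i+1 mod 3 ∉ S; and agent 3 has arbitrary losses. -/
open scoped ENNReal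

/-- The cluster containing agent `i` under the clustering (assignment) `C`. -/
def clusterOf {n k : ℕ} (C : Fin n → Fin k) (i : Fin n) : Finset (Fin n) :=
  Finset.univ.filter (fun j => C j = C i)

/-- `C` is in the `α`-core (for extended-nonnegative-real-valued losses): there is no group `S`
of at least `n/k` agents such that `α · ℓ i S < ℓ i (C(i))` for every `i ∈ S`. -/
def InCoreE {n k : ℕ} (α : ℝ≥0∞) (ℓ : Fin n → Finset (Fin n) → ℝ≥0∞)
    (C : Fin n → Fin k) : Prop :=
  ¬ ∃ S : Finset (Fin n), (n : ℝ) / k ≤ S.card ∧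
      ∀ i ∈ S, α * ℓ i S < ℓ i (clusterOf C i)

def mysucc (i : Fin 4) : Fin 4 := ⟨(i.val + 1) % 3, Nat.lt_succ_of_lt (Nat.mod_lt _ (by norm_num))⟩

noncomputable def myloss (i : Fin 4) (S : Finset (Fin 4)) : ℝ≥0∞ :=
  if (3 : Fin 4) ∈ S ∨ 3 ≤ S.card then ⊤ else if mysucc i ∈ S then 0 else 1

lemma mem_clusterOf {C : Fin 4 → Fin 2} {i j : Fin 4} :
    j ∈ clusterOf C i ↔ C j = C i := by simp [clusterOf]

lemma top_of_mem3 (C : Fin 4 → Fin 2) (i : Fin 4) (h : C 3 = C i) :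
    myloss i (clusterOf C i) = ⊤ := by
  unfold myloss
  rw [if_pos (Or.inl (mem_clusterOf.mpr h))]

lemma top_of_big (C : Fin 4 → Fin 2) (i : Fin 4) (h : 3 ≤ (clusterOf C i).card) :
    myloss i (clusterOf C i) = ⊤ := by
  unfold myloss
  rw [if_pos (Or.inr h)]

lemma ne_zero_of (C : Fin 4 → Fin 2) (i : Fin 4) (h : C (mysucc i) ≠ C i) :
    myloss i (clusterOf C i) ≠ 0 := by
  unfold myloss
  split
  · exact ENNReal.top_ne_zero
  · rw [if_neg (fun hm => h (mem_clusterOf.mp hm))]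
    exact one_ne_zero

lemma violation (α : ℝ≥0∞) (hαt : α ≠ ⊤) (C : Fin 4 → Fin 2) (i j : Fin 4)
    (hi : i.val < 3) (hj : j.val = (i.val + 1) % 3)
    (h1 : myloss i (clusterOf C i) ≠ 0) (h2 : myloss j (clusterOf C j) = ⊤) :
    ¬ InCoreE α myloss C := by
  intro h
  apply h
  have hij : i ≠ j := Fin.ne_of_val_ne (by omega)
  have h3i : (3 : Fin 4) ≠ i := Fin.ne_of_val_ne (by simp; omega)
  have h3j : (3 : Fin 4) ≠ j := Fin.ne_of_val_ne (by simp; omega)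
  have hcard : ({i, j} : Finset (Fin 4)).card = 2 := by
    rw [Finset.card_insert_of_notMem (by simp [hij]), Finset.card_singleton]
  have h3S : (3 : Fin 4) ∉ ({i, j} : Finset (Fin 4)) := by simp [h3i, h3j]
  have hnotbig : ¬ ((3 : Fin 4) ∈ ({i, j} : Finset (Fin 4)) ∨ 3 ≤ ({i, j} : Finset (Fin 4)).card) := by
    rw [hcard]; push_neg; exact ⟨h3S, by omega⟩
  refine ⟨{i, j}, ?_, ?_⟩
  · rw [hcard]; norm_num
  · intro x hx
    rcases Finset.mem_insert.mp hx with rfl | hx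
    · have hval : myloss x ({x, j} : Finset (Fin 4)) = 0 := by
        unfold myloss
        rw [if_neg hnotbig, if_pos]
        have : mysucc x = j := Fin.ext (by simp [mysucc, hj])
        simp [this]
      rw [hval, mul_zero]
      exact pos_iff_ne_zero.mpr h1
    · rw [Finset.mem_singleton] at hx
      subst hx
      have hval : myloss x ({i, x} : Finset (Fin 4)) = 1 := by
        unfold myloss
        rw [if_neg hnotbig, if_neg]
        have hs1 : mysucc x ≠ i := Fin.ne_of_val_ne (by simp [mysucc]; omega)
        have hs2 : mysucc x ≠ x := Fin.ne_of_val_ne (by simp [mysucc]; omega)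
        simp [hs1, hs2]
      rw [hval, h2, mul_one]
      exact hαt.lt_top

/-- There is an instance with `n = 4` agents and `k = 2` (concretely, the one where for
`i ∈ {0,1,2}`: `ℓ i S = ∞` if `S = {0,1,2}` or `3 ∈ S`; `ℓ i S = 0` if `S = {i, i+1 mod 3}`;
`ℓ i S = 1` if `|S| = 2` and `i+1 mod 3 ∉ S` (and `3 ∉ S`); agent `3` arbitrary)
such that for every finite `α ≥ 1`, no 2-clustering is in the `α`-core. -/
theorem stmt0 :
    ∃ ℓ : Fin 4 → Finset (Fin 4) → ℝ≥0∞,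
      (∀ i : Fin 4, i.val < 3 → ∀ S : Finset (Fin 4), i ∈ S →
        ((S = ({0, 1, 2} : Finset (Fin 4)) ∨ (3 : Fin 4) ∈ S) → ℓ i S = ⊤) ∧
        (S = ({i, ⟨(i.val + 1) % 3, by omega⟩} : Finset (Fin 4)) → ℓ i S = 0) ∧
        (S.card = 2 → (3 : Fin 4) ∉ S → (⟨(i.val + 1) % 3, by omega⟩ : Fin 4) ∉ S →
          ℓ i S = 1)) ∧
      ∀ α : ℝ≥0∞, 1 ≤ α → α ≠ ⊤ → ∀ C : Fin 4 → Fin 2, ¬ InCoreE α ℓ C := by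
  refine ⟨myloss, ?_, ?_⟩
  · intro i hi S hiS
    refine ⟨?_, ?_, ?_⟩
    · rintro (rfl | h3)
      · unfold myloss
        rw [if_pos (Or.inr (by decide))]
      · unfold myloss
        rw [if_pos (Or.inl h3)]
    · rintro rfl
      have h3i : (3 : Fin 4) ≠ i := Fin.ne_of_val_ne (by simp; omega)
      have h3s : (3 : Fin 4) ≠ (⟨(i.val + 1) % 3, by omega⟩ : Fin 4) :=
        Fin.ne_of_val_ne (by simp; omega)
      unfold myloss
      rw [if_neg, if_pos]
      · exact Finset.mem_insert_of_mem (by simp [mysucc])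
      · push_neg
        refine ⟨by simp [h3i, h3s], ?_⟩
        have hc2 : ({i, (⟨(i.val + 1) % 3, by omega⟩ : Fin 4)} : Finset (Fin 4)).card ≤ 2 :=
          le_trans (Finset.card_insert_le _ _) (by simp)
        omega
    · intro hc h3 hs
      unfold myloss
      rw [if_neg (by rw [hc]; push_neg; exact ⟨h3, by omega⟩)]
      exact if_neg (show mysucc i ∉ S from hs)
  · intro α hα1 hαt C
    by_cases h1 : C 1 = C 3
    · exact violation α hαt C 0 1 (by omega) (by simp)
        (by
          by_cases h0 : C 0 = C 3
          · rw [top_of_mem3 C 0 h0.symm]; exact ENNReal.top_ne_zero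
          · exact ne_zero_of C 0 (by show C 1 ≠ C 0; rw [h1]; exact fun h => h0 h.symm))
        (top_of_mem3 C 1 h1.symm)
    · by_cases h2 : C 2 = C 3
      · exact violation α hαt C 1 2 (by omega) (by simp)
          (ne_zero_of C 1 (by show C 2 ≠ C 1; rw [h2]; exact fun h => h1 h.symm))
          (top_of_mem3 C 2 h2.symm)
      · by_cases h0 : C 0 = C 3
        · exact violation α hαt C 2 0 (by omega) (by simp)
            (ne_zero_of C 2 (by show C 0 ≠ C 2; rw [h0]; exact fun h => h2 h.symm))
            (top_of_mem3 C 0 h0.symm)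
        · -- C 0, C 1, C 2 all differ from C 3, so in Fin 2 they are all equal
          have key : ∀ a b : Fin 4, C a ≠ C 3 → C b ≠ C 3 → C a = C b := by
            intro a b ha hb
            have ha' : (C a).val ≠ (C 3).val := fun h => ha (Fin.ext h)
            have hb' : (C b).val ≠ (C 3).val := fun h => hb (Fin.ext h)
            have h1 := (C a).isLt
            have h2 := (C b).isLt
            have h3 := (C 3).isLt
            exact Fin.ext (by omega)
          have e01 : C 0 = C 1 := key 0 1 h0 h1
          have e02 : C 0 = C 2 := key 0 2 h0 h2
          have hsub : ∀ m : Fin 4, C m = C 0 → ({0, 1, 2} : Finset (Fin 4)) ⊆ clusterOf C m := by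
            intro m hm x hx
            simp only [Finset.mem_insert, Finset.mem_singleton] at hx
            rcases hx with rfl | rfl | rfl <;> rw [mem_clusterOf, hm] <;>
              first | rfl | exact e01.symm | exact e02.symm
          have big : ∀ m : Fin 4, C m = C 0 → 3 ≤ (clusterOf C m).card := by
            intro m hm
            calc 3 = ({0, 1, 2} : Finset (Fin 4)).card := by decide
              _ ≤ (clusterOf C m).card := Finset.card_le_card (hsub m hm)
          exact violation α hαt C 0 1 (by omega) (by simp)
            (by rw [top_of_big C 0 (big 0 rfl)]; exact ENNReal.top_ne_zero)
            (top_of_big C 1 (big 1 e01.symm))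
end

section
/- For every α with 1 ≤ α < (1+√3)/2, there exist a number of agents n, a number of clusters k, and an extended metric d on the n agents (distances taking values in [0, ∞] and satisfying the triangle inequality) such that no k-clustering is in the α-core for the average loss. -/
open scoped ENNReal

/-- The average loss of agent `i` in cluster `S`, for an extended metric `d`. -/
noncomputable def avgLossE {n : ℕ} (d : Fin n → Fin n → ℝ≥0∞) (i : Fin n)
    (S : Finset (Fin n)) : ℝ≥0∞ :=
  (∑ j ∈ S, d i j) / (S.card : ℝ≥0∞)

/-- An integer distance matrix on 8 points: three points at location `A`, three at `B`,
one at `x`, one at `y`, with `d(A,B)=10`, `d(A,x)=51`, `d(A,y)=14`, `d(B,x)=58`,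
`d(B,y)=21`, `d(x,y)=60`. -/
def D8 : Fin 8 → Fin 8 → ℕ :=
  ![![0,0,0,10,10,10,51,14],
    ![0,0,0,10,10,10,51,14],
    ![0,0,0,10,10,10,51,14],
    ![10,10,10,0,0,0,58,21],
    ![10,10,10,0,0,0,58,21],
    ![10,10,10,0,0,0,58,21],
    ![51,51,51,58,58,58,0,60],
    ![14,14,14,21,21,21,60,0]]

/-- Candidate blocking coalitions. -/
def cands8 : List (Finset (Fin 8)) :=
  [{0,1,2,3},{0,1,2,7},{0,3,4,5},{1,3,4,5},{2,3,4,5},{3,4,5,7},{0,1,2,4},{0,1,2,5}]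

set_option maxRecDepth 10000 in
theorem main_check : ∀ C : Fin 8 → Fin 2, ∃ S ∈ cands8, 4 ≤ S.card ∧
    ∀ i ∈ S, 137 * (∑ j ∈ S, D8 i j) * (clusterOf C i).card
      < 100 * (∑ j ∈ clusterOf C i, D8 i j) * S.card := by decide

lemma key (α : ℝ) (hα : 100 * α ≤ 137) (a s b c : ℕ)
    (hs : s ≠ 0) (hc : c ≠ 0) (h : 137 * a * c < 100 * b * s) :
    ENNReal.ofReal α * ((a : ℝ≥0∞) / s) < (b : ℝ≥0∞) / c := by
  have hs0 : (s : ℝ≥0∞) ≠ 0 := by exact_mod_cast hs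
  have hc0 : (c : ℝ≥0∞) ≠ 0 := by exact_mod_cast hc
  have hst : (s : ℝ≥0∞) ≠ ⊤ := by simp
  have hct : (c : ℝ≥0∞) ≠ ⊤ := by simp
  rw [ENNReal.lt_div_iff_mul_lt (Or.inl hc0) (Or.inl hct)]
  have e : ENNReal.ofReal α * ((a : ℝ≥0∞) / s) * c
      = (a * (ENNReal.ofReal α * c)) / s := by
    simp only [div_eq_mul_inv]; ring
  rw [e, ENNReal.div_lt_iff (Or.inl hs0) (Or.inl hst)]
  have h100 : (100 : ℝ≥0∞) * ENNReal.ofReal α ≤ 137 := by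
    rw [show (100:ℝ≥0∞) = ENNReal.ofReal 100 by simp,
      ← ENNReal.ofReal_mul (by norm_num)]
    calc ENNReal.ofReal (100 * α) ≤ ENNReal.ofReal 137 :=
          ENNReal.ofReal_le_ofReal hα
      _ = 137 := by simp
  rw [← ENNReal.mul_lt_mul_iff_right (a := 100) (by norm_num) (by norm_num)]
  calc (100:ℝ≥0∞) * ((a : ℝ≥0∞) * (ENNReal.ofReal α * c))
      = (a : ℝ≥0∞) * c * (100 * ENNReal.ofReal α) := by ring
    _ ≤ (a : ℝ≥0∞) * c * 137 := mul_le_mul_right h100 _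
    _ = ((137 * a * c : ℕ) : ℝ≥0∞) := by push_cast; ring
    _ < ((100 * b * s : ℕ) : ℝ≥0∞) := by exact_mod_cast h
    _ = 100 * ((b : ℝ≥0∞) * s) := by push_cast; ring

/-- For every `α` with `1 ≤ α < (1+√3)/2`, there are a number of agents `n`, a number of
clusters `k`, and an extended (pseudo)metric `d` on the agents such that no `k`-clustering is
in the `α`-core for the average loss. -/
theorem stmt1 (α : ℝ) (hα1 : 1 ≤ α) (hα2 : α < (1 + Real.sqrt 3) / 2) :
    ∃ (n k : ℕ), 1 ≤ k ∧ k ≤ n ∧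
      ∃ d : Fin n → Fin n → ℝ≥0∞,
        (∀ i, d i i = 0) ∧ (∀ i j, d i j = d j i) ∧
        (∀ i j l, d i l ≤ d i j + d j l) ∧
        ∀ C : Fin n → Fin k, ∃ S : Finset (Fin n), (n : ℝ) / k ≤ S.card ∧
          ∀ i ∈ S, ENNReal.ofReal α * avgLossE d i S < avgLossE d i (clusterOf C i) := by
  have hsqrt : Real.sqrt 3 < 1.74 := by
    nlinarith [Real.sq_sqrt (by norm_num : (3:ℝ) ≥ 0), Real.sqrt_nonneg 3]
  have hα137 : 100 * α ≤ 137 := by nlinarith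
  refine ⟨8, 2, by norm_num, by norm_num, fun i j => (D8 i j : ℝ≥0∞), ?_, ?_, ?_, ?_⟩
  · intro i; have : D8 i i = 0 := by revert i; decide
    simp [this]
  · intro i j; have : D8 i j = D8 j i := by revert i j; decide
    simp [this]
  · intro i j l
    have : D8 i l ≤ D8 i j + D8 j l := by revert i j l; decide
    simp only []
    exact_mod_cast this
  · intro C
    obtain ⟨S, _, hcard, hblock⟩ := main_check C
    refine ⟨S, ?_, ?_⟩
    · have : (4:ℝ) ≤ (S.card : ℝ) := by exact_mod_cast hcard
      norm_num; linarith
    · intro i hi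
      have hiC : i ∈ clusterOf C i := by simp [clusterOf]
      have hc : (clusterOf C i).card ≠ 0 := by
        simp only [ne_eq, Finset.card_eq_zero]
        exact fun h => by simp [h] at hiC
      have hs : S.card ≠ 0 := by omega
      have := key α hα137 (∑ j ∈ S, D8 i j) S.card
        (∑ j ∈ clusterOf C i, D8 i j) (clusterOf C i).card hs hc (hblock i hi)
      simpa [avgLossE, Nat.cast_sum] using this
end

section
/- For any n agents equipped with a metric d and any number of clusters k with 1 ≤ k < n, there exists a k-clustering that is in the (2·⌈n/k⌉ − 3)-core for the average loss. -/
open scoped Classical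

/-- The maximum of `f` over the finite set `S` (`0` if `S` is empty). -/
noncomputable def maxOver {ι : Type*} (S : Finset ι) (f : ι → ℝ) : ℝ :=
  if h : S.Nonempty then S.sup' h f else 0

/-- The minimum of `f` over the finite set `S` (`0` if `S` is empty). -/
noncomputable def minOver {ι : Type*} (S : Finset ι) (f : ι → ℝ) : ℝ :=
  if h : S.Nonempty then S.inf' h f else 0

/-- The average loss of agent `i` in cluster `S`. -/
noncomputable def avgLoss {n : ℕ} (d : Fin n → Fin n → ℝ) (i : Fin n)
    (S : Finset (Fin n)) : ℝ :=
  (∑ j ∈ S, d i j) / (S.card : ℝ)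

/-- The maximum loss of agent `i` in cluster `S`. -/
noncomputable def maxLoss {n : ℕ} (d : Fin n → Fin n → ℝ) (i : Fin n)
    (S : Finset (Fin n)) : ℝ :=
  maxOver S (d i)

/-- `d` is a (pseudo)metric on the agents: zero on the diagonal, symmetric, and
satisfying the triangle inequality. -/
def IsPseudometric {n : ℕ} (d : Fin n → Fin n → ℝ) : Prop :=
  (∀ i, d i i = 0) ∧ (∀ i j, d i j = d j i) ∧ (∀ i j l, d i l ≤ d i j + d j l)

/-- `C` is in the `α`-core: there is no group `S` of at least `n/k` agents such that
`α · ℓ i S < ℓ i (C(i))` for every `i ∈ S`. -/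
def InCore {n k : ℕ} (α : ℝ) (ℓ : Fin n → Finset (Fin n) → ℝ) (C : Fin n → Fin k) : Prop :=
  ¬ ∃ S : Finset (Fin n), (n : ℝ) / k ≤ S.card ∧ ∀ i ∈ S, α * ℓ i S < ℓ i (clusterOf C i)

/-- `C` satisfies `α`-FJR: there is no group `S` of at least `n/k` agents such that
`α · max_{i ∈ S} ℓ i S < min_{j ∈ S} ℓ j (C(j))`. -/
def SatisfiesFJR {n k : ℕ} (α : ℝ) (ℓ : Fin n → Finset (Fin n) → ℝ)
    (C : Fin n → Fin k) : Prop :=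
  ¬ ∃ S : Finset (Fin n), (n : ℝ) / k ≤ S.card ∧
      α * maxOver S (fun i => ℓ i S) < minOver S (fun j => ℓ j (clusterOf C j))

namespace Stmt2Aux

variable {n : ℕ}

/-- selecting the `m` nearest points -/
lemma exists_nearest {ι : Type*} [DecidableEq ι] (f : ι → ℝ) :
    ∀ (m : ℕ) (S : Finset ι), m ≤ S.card →
      ∃ T, T ⊆ S ∧ T.card = m ∧ ∀ x ∈ T, ∀ y ∈ S \ T, f x ≤ f y := by
  intro m
  induction m with
  | zero => intro S _; exact ⟨∅, by simp⟩
  | succ m ih =>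
    intro S hS
    obtain ⟨T, hTS, hTc, hT⟩ := ih S (le_trans (Nat.le_succ m) hS)
    have hne : (S \ T).Nonempty := by
      rw [← Finset.card_pos, Finset.card_sdiff_of_subset hTS]; omega
    obtain ⟨y₀, hy₀, hy₀min⟩ := Finset.exists_min_image (S \ T) f hne
    refine ⟨insert y₀ T, ?_, ?_, ?_⟩
    · exact Finset.insert_subset (Finset.mem_sdiff.mp hy₀).1 hTS
    · rw [Finset.card_insert_of_notMem (Finset.mem_sdiff.mp hy₀).2, hTc]
    · intro x hx y hy
      have hy' : y ∈ S \ T := by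
        rw [Finset.mem_sdiff] at hy ⊢
        exact ⟨hy.1, fun h => hy.2 (Finset.mem_insert_of_mem h)⟩
      rcases Finset.mem_insert.mp hx with h | h
      · exact h ▸ hy₀min y hy'
      · exact hT x h y hy'

/-- Invariant of the greedy cohesive clustering process. -/
def Good (m : ℕ) (d : Fin n → Fin n → ℝ) : Finset (Fin n) → List (Finset (Fin n)) → Prop
  | R, [] => R.card < m
  | R, T :: L =>
      (T ⊆ R ∧ T.card = m ∧ ∃ c ∈ T, ∀ c' T', c' ∈ T' → T' ⊆ R → T'.card = m →
        maxOver T (d c) ≤ maxOver T' (d c')) ∧ Good m d (R \ T) L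

lemma exists_good (m : ℕ) (hm : 1 ≤ m) (d : Fin n → Fin n → ℝ) :
    ∀ (fuel : ℕ) (R : Finset (Fin n)), R.card ≤ fuel → ∃ L, Good m d R L := by
  intro fuel
  induction fuel with
  | zero => intro R hR; exact ⟨[], by simp [Good]; omega⟩
  | succ fuel ih =>
    intro R hR
    by_cases hcard : R.card < m
    · exact ⟨[], hcard⟩
    push_neg at hcard
    set P : Finset (Fin n × Finset (Fin n)) :=
      Finset.univ.filter (fun p => p.1 ∈ p.2 ∧ p.2 ⊆ R ∧ p.2.card = m) with hP
    have hPne : P.Nonempty := by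
      obtain ⟨T, hTR, hTc⟩ := Finset.exists_subset_card_eq hcard
      have : T.Nonempty := Finset.card_pos.mp (by omega)
      obtain ⟨c, hc⟩ := this
      exact ⟨(c, T), by simp [hP, hc, hTR, hTc]⟩
    obtain ⟨p, hp, hpmin⟩ := Finset.exists_min_image P (fun p => maxOver p.2 (d p.1)) hPne
    simp only [hP, Finset.mem_filter, Finset.mem_univ, true_and] at hp
    obtain ⟨hc, hTR, hTc⟩ := hp
    have hstep : (R \ p.2).card ≤ fuel := by
      rw [Finset.card_sdiff_of_subset hTR]; omega
    obtain ⟨L, hL⟩ := ih (R \ p.2) hstep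
    refine ⟨p.2 :: L, ⟨⟨hTR, hTc, p.1, hc, ?_⟩, hL⟩⟩
    intro c' T' hc' hT'R hT'c
    exact hpmin (c', T') (by simp [hP, hc', hT'R, hT'c])

lemma good_mem_subset {m : ℕ} {d : Fin n → Fin n → ℝ} :
    ∀ {L : List (Finset (Fin n))} {R : Finset (Fin n)}, Good m d R L →
      ∀ T ∈ L, T ⊆ R := by
  intro L
  induction L with
  | nil => intro R _ T hT; simp at hT
  | cons A L ih =>
    intro R hg T hT
    rcases List.mem_cons.mp hT with h | h
    · exact h ▸ hg.1.1
    · exact (ih hg.2 T h).trans (Finset.sdiff_subset)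

lemma good_mem_card {m : ℕ} {d : Fin n → Fin n → ℝ} :
    ∀ {L : List (Finset (Fin n))} {R : Finset (Fin n)}, Good m d R L →
      ∀ T ∈ L, T.card = m := by
  intro L
  induction L with
  | nil => intro R _ T hT; simp at hT
  | cons A L ih =>
    intro R hg T hT
    rcases List.mem_cons.mp hT with h | h
    · exact h ▸ hg.1.2.1
    · exact ih hg.2 T h

lemma good_pairwise {m : ℕ} {d : Fin n → Fin n → ℝ} :
    ∀ {L : List (Finset (Fin n))} {R : Finset (Fin n)}, Good m d R L →
      L.Pairwise Disjoint := by
  intro L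
  induction L with
  | nil => intro R _; exact List.Pairwise.nil
  | cons A L ih =>
    intro R hg
    refine List.Pairwise.cons ?_ (ih hg.2)
    intro B hB
    have hBsub : B ⊆ R \ A := good_mem_subset hg.2 B hB
    exact (Finset.disjoint_sdiff.mono_right hBsub)

def unionL : List (Finset (Fin n)) → Finset (Fin n) :=
  fun L => L.foldr (· ∪ ·) ∅

lemma mem_unionL {i : Fin n} : ∀ {L : List (Finset (Fin n))},
    i ∈ unionL L ↔ ∃ T ∈ L, i ∈ T := by
  intro L
  induction L with
  | nil => simp [unionL]
  | cons A L ih => simp [unionL] at ih ⊢; rw [ih]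

lemma unionL_subset {X : Finset (Fin n)} {L : List (Finset (Fin n))}
    (h : ∀ T ∈ L, T ⊆ X) : unionL L ⊆ X := by
  intro i hi
  obtain ⟨T, hT, hiT⟩ := mem_unionL.mp hi
  exact h T hT hiT

lemma good_union_card {m : ℕ} {d : Fin n → Fin n → ℝ} :
    ∀ {L : List (Finset (Fin n))} {R : Finset (Fin n)}, Good m d R L →
      (unionL L).card = L.length * m := by
  intro L
  induction L with
  | nil => intro R _; simp [unionL]
  | cons A L ih =>
    intro R hg
    have h1 : unionL (A :: L) = A ∪ unionL L := rfl
    have hsub : unionL L ⊆ R \ A := unionL_subset (good_mem_subset hg.2)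
    have hdisj : Disjoint A (unionL L) :=
      (Finset.disjoint_sdiff.mono_right hsub)
    rw [h1, Finset.card_union_of_disjoint hdisj, hg.1.2.1, ih hg.2]
    simp [List.length_cons]; ring

lemma good_leftover {m : ℕ} {d : Fin n → Fin n → ℝ} :
    ∀ {L : List (Finset (Fin n))} {R : Finset (Fin n)}, Good m d R L →
      (R \ unionL L).card < m := by
  intro L
  induction L with
  | nil => intro R hg; simpa [unionL, Good] using hg
  | cons A L ih =>
    intro R hg
    have h1 : R \ unionL (A :: L) = (R \ A) \ unionL L := by
      show R \ (A ∪ unionL L) = _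
      rw [sdiff_sdiff]; rfl
    rw [h1]
    exact ih hg.2

lemma blocking {m : ℕ} (hm : 2 ≤ m) {d : Fin n → Fin n → ℝ} (hd : IsPseudometric d) :
    ∀ {L : List (Finset (Fin n))} {R : Finset (Fin n)}, Good m d R L →
      ∀ {S : Finset (Fin n)}, S ⊆ R → m ≤ S.card →
        ∃ i ∈ S, ∃ T ∈ L, i ∈ T ∧
          avgLoss d i T ≤ (2 * (m : ℝ) - 3) * avgLoss d i S := by
  have hd0 : ∀ a b, 0 ≤ d a b := by
    intro a b
    have h1 := hd.1 a
    have h2 := hd.2.1 a b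
    have h3 := hd.2.2 a b a
    linarith [h2 ▸ h3]
  intro L
  induction L with
  | nil =>
    intro R hg S hSR hScard
    exact absurd (Finset.card_le_card hSR) (by simp only [Good] at hg; omega)
  | cons T L ih =>
    intro R hg S hSR hScard
    obtain ⟨⟨hTR, hTm, c, hcT, hmin⟩, hg'⟩ := hg
    by_cases hint : (S ∩ T).Nonempty
    · -- main case
      obtain ⟨i, hiST⟩ := hint
      have hiS : i ∈ S := (Finset.mem_inter.mp hiST).1
      have hiT : i ∈ T := (Finset.mem_inter.mp hiST).2
      have hTne : T.Nonempty := ⟨c, hcT⟩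
      set r : ℝ := T.sup' hTne (d c) with hrdef
      have hrmax : maxOver T (d c) = r := dif_pos hTne
      have hr_ub : ∀ y ∈ T, d c y ≤ r := fun y hy => Finset.le_sup' (d c) hy
      have hr0 : (0 : ℝ) ≤ r := hd.1 c ▸ hr_ub c hcT
      -- build T' : the m nearest points of S to i (including i)
      have hScard' : m - 1 ≤ (S.erase i).card := by
        rw [Finset.card_erase_of_mem hiS]; omega
      obtain ⟨T'', hT''sub, hT''card, hnear⟩ :=
        exists_nearest (d i) (m - 1) (S.erase i) hScard'
      have hiT'' : i ∉ T'' := fun h => (Finset.mem_erase.mp (hT''sub h)).1 rfl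
      set T' : Finset (Fin n) := insert i T'' with hT'def
      have hT'card : T'.card = m := by
        rw [hT'def, Finset.card_insert_of_notMem hiT'', hT''card]; omega
      have hT'S : T' ⊆ S :=
        Finset.insert_subset hiS (hT''sub.trans (Finset.erase_subset _ _))
      have hiT' : i ∈ T' := Finset.mem_insert_self i T''
      have hT'ne : T'.Nonempty := ⟨i, hiT'⟩
      set ρ : ℝ := T'.sup' hT'ne (d i) with hρdef
      have hρmax : maxOver T' (d i) = ρ := dif_pos hT'ne
      have hrρ : r ≤ ρ := by
        have := hmin i T' hiT' (hT'S.trans hSR) hT'card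
        rwa [hrmax, hρmax] at this
      have hρ0 : (0 : ℝ) ≤ ρ := hd.1 i ▸ Finset.le_sup' (d i) hiT'
      have hρfar : ∀ y ∈ S \ T', ρ ≤ d i y := by
        obtain ⟨x, hxT', hxeq⟩ := Finset.exists_mem_eq_sup' hT'ne (d i)
        intro y hy
        obtain ⟨hyS, hyT'⟩ := Finset.mem_sdiff.mp hy
        have hρx : ρ = d i x := hρdef.trans hxeq
        rcases Finset.mem_insert.mp hxT' with hxi | hxT''
        · rw [hρx, hxi, hd.1 i]; exact hd0 i y
        · rw [hρx]
          refine hnear x hxT'' y (Finset.mem_sdiff.mpr ⟨Finset.mem_erase.mpr ⟨?_, hyS⟩, ?_⟩)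
          · intro h; exact hyT' (h ▸ hiT')
          · intro h; exact hyT' (Finset.mem_insert_of_mem h)
      -- casts
      have hm' : (2 : ℝ) ≤ (m : ℝ) := by exact_mod_cast hm
      have hs' : (m : ℝ) ≤ (S.card : ℝ) := by exact_mod_cast hScard
      have hs0 : (0 : ℝ) < (S.card : ℝ) := by linarith
      have hm0 : (0 : ℝ) < (m : ℝ) := by linarith
      set s : ℝ := (S.card : ℝ) with hsdef
      -- lower bound on the sum over S
      have hsumS : (s - (m : ℝ) + 1) * ρ ≤ ∑ y ∈ S, d i y := by
        have e1 : ∑ y ∈ S \ T', d i y + ∑ y ∈ T', d i y = ∑ y ∈ S, d i y :=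
          Finset.sum_sdiff hT'S
        have e2 : (S \ T').card • ρ ≤ ∑ y ∈ S \ T', d i y :=
          Finset.card_nsmul_le_sum _ _ _ hρfar
        have e3 : ρ ≤ ∑ y ∈ T', d i y := by
          obtain ⟨x, hxT', hxeq⟩ := Finset.exists_mem_eq_sup' hT'ne (d i)
          rw [hρdef, hxeq]
          exact Finset.single_le_sum (fun y _ => hd0 i y) hxT'
        have e4 : (S \ T').card = S.card - m := by
          rw [Finset.card_sdiff_of_subset hT'S, hT'card]
        have e5 : ((S.card - m : ℕ) : ℝ) = s - (m : ℝ) := by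
          rw [hsdef]; exact Nat.cast_sub hScard
        rw [e4, nsmul_eq_mul, e5] at e2
        linarith
      -- upper bound on the sum over T
      have hsumT : ∑ y ∈ T, d i y ≤ (2 * (m : ℝ) - 3) * r := by
        by_cases hic : i = c
        · subst hic
          have e1 : ∑ y ∈ T.erase i, d i y + d i i = ∑ y ∈ T, d i y :=
            Finset.sum_erase_add T _ hiT
          have e2 : ∑ y ∈ T.erase i, d i y ≤ (T.erase i).card • r :=
            Finset.sum_le_card_nsmul _ _ _ (fun y hy => hr_ub y (Finset.mem_of_mem_erase hy))
          have e3 : (T.erase i).card = m - 1 := by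
            rw [Finset.card_erase_of_mem hiT, hTm]
          have e4 : ((m - 1 : ℕ) : ℝ) = (m : ℝ) - 1 := by
            rw [Nat.cast_sub (by omega : 1 ≤ m)]; norm_num
          rw [e3, nsmul_eq_mul, e4] at e2
          have := hd.1 i
          nlinarith
        · have hcTi : c ∈ T.erase i := Finset.mem_erase.mpr ⟨fun h => hic h.symm, hcT⟩
          have e1 : ∑ y ∈ T.erase i, d i y + d i i = ∑ y ∈ T, d i y :=
            Finset.sum_erase_add T _ hiT
          have e2 : ∑ y ∈ (T.erase i).erase c, d i y + d i c = ∑ y ∈ T.erase i, d i y :=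
            Finset.sum_erase_add _ _ hcTi
          have e3 : ∑ y ∈ (T.erase i).erase c, d i y ≤
              ((T.erase i).erase c).card • (d i c + r) := by
            refine Finset.sum_le_card_nsmul _ _ _ (fun y hy => ?_)
            have hyT : y ∈ T := Finset.mem_of_mem_erase (Finset.mem_of_mem_erase hy)
            have := hd.2.2 i c y
            have := hr_ub y hyT
            linarith
          have e4 : ((T.erase i).erase c).card = m - 2 := by
            rw [Finset.card_erase_of_mem hcTi, Finset.card_erase_of_mem hiT, hTm]
            omega
          have e5 : ((m - 2 : ℕ) : ℝ) = (m : ℝ) - 2 := by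
            rw [Nat.cast_sub (by omega : 2 ≤ m)]; norm_num
          rw [e4, nsmul_eq_mul, e5] at e3
          have hdicr : d i c ≤ r := by
            rw [hd.2.1 i c]; exact hr_ub i hiT
          have hdic0 : 0 ≤ d i c := hd0 i c
          have := hd.1 i
          nlinarith
      -- chain everything
      have step1 : ∑ y ∈ T, d i y ≤ (2 * (m : ℝ) - 3) * ρ :=
        le_trans hsumT (mul_le_mul_of_nonneg_left hrρ (by linarith))
      have step2 : ρ * s ≤ (∑ y ∈ S, d i y) * (m : ℝ) := by
        have hA : (s - (m : ℝ) + 1) * ρ * (m : ℝ) ≤ (∑ y ∈ S, d i y) * (m : ℝ) :=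
          mul_le_mul_of_nonneg_right hsumS hm0.le
        nlinarith [mul_nonneg (mul_nonneg (by linarith : (0:ℝ) ≤ (m:ℝ) - 1)
          (by linarith : (0:ℝ) ≤ s - (m:ℝ))) hρ0]
      refine ⟨i, hiS, T, List.mem_cons_self (a := T) (l := L), hiT, ?_⟩
      show avgLoss d i T ≤ (2 * (m : ℝ) - 3) * avgLoss d i S
      unfold avgLoss
      rw [hTm]
      rw [div_le_iff₀ hm0]
      have heq : (2 * (m : ℝ) - 3) * ((∑ j ∈ S, d i j) / (S.card : ℝ)) * (m : ℝ)
          = ((2 * (m : ℝ) - 3) * ((∑ j ∈ S, d i j) * (m : ℝ))) / s := by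
        rw [hsdef]; ring
      rw [heq, le_div_iff₀ hs0]
      calc (∑ y ∈ T, d i y) * s ≤ ((2 * (m : ℝ) - 3) * ρ) * s :=
            mul_le_mul_of_nonneg_right step1 hs0.le
        _ = (2 * (m : ℝ) - 3) * (ρ * s) := by ring
        _ ≤ (2 * (m : ℝ) - 3) * ((∑ y ∈ S, d i y) * (m : ℝ)) :=
            mul_le_mul_of_nonneg_left step2 (by linarith)
    · -- S misses T : recurse
      have hSsub : S ⊆ R \ T := by
        intro x hx
        refine Finset.mem_sdiff.mpr ⟨hSR hx, fun hxT => hint ⟨x, Finset.mem_inter.mpr ⟨hx, hxT⟩⟩⟩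
      obtain ⟨i, hi, T'', hT'', hrest⟩ := ih hg' hSsub hScard
      exact ⟨i, hi, T'', List.mem_cons_of_mem _ hT'', hrest⟩

end Stmt2Aux

open Stmt2Aux in
/-- For any `n` agents with a metric `d` and any `k` with `1 ≤ k < n`, there exists a
`k`-clustering in the `(2⌈n/k⌉ − 3)`-core for the average loss. -/
theorem stmt2 (n k : ℕ) (hk : 1 ≤ k) (hkn : k < n) (d : Fin n → Fin n → ℝ)
    (hd : IsPseudometric d) :
    ∃ C : Fin n → Fin k, InCore (2 * (⌈(n : ℝ) / k⌉₊ : ℝ) - 3) (avgLoss d) C := by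
  set m : ℕ := ⌈(n : ℝ) / k⌉₊ with hmdef
  have hk0 : (0 : ℝ) < (k : ℝ) := by exact_mod_cast hk
  have hm2 : 2 ≤ m := by
    have h1 : (1 : ℝ) < (n : ℝ) / k := by
      rw [lt_div_iff₀ hk0, one_mul]
      exact_mod_cast hkn
    have h2 : (1:ℕ) < m := Nat.lt_ceil.mpr (by exact_mod_cast h1)
    omega
  have hm1 : 1 ≤ m := by omega
  have hnkm : n ≤ k * m := by
    have h1 : (n : ℝ) / k ≤ m := Nat.le_ceil _
    rw [div_le_iff₀ hk0] at h1
    exact_mod_cast (by linarith : (n : ℝ) ≤ (k : ℝ) * (m : ℝ))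
  obtain ⟨L, hg⟩ := exists_good m hm1 d n Finset.univ (by simp)
  have hdisj := good_pairwise hg
  have hUcard := good_union_card hg
  have hUle : (unionL L).card ≤ n := le_trans (Finset.card_le_univ _) (by simp)
  have htk : L.length ≤ k := by
    refine Nat.le_of_mul_le_mul_right ?_ (by omega : 0 < m)
    calc L.length * m = (unionL L).card := hUcard.symm
      _ ≤ n := hUle
      _ ≤ k * m := hnkm
  let C : Fin n → Fin k := fun i =>
    if h : ∃ T, T ∈ L ∧ i ∈ T then
      ⟨List.idxOf h.choose L, lt_of_lt_of_le (List.idxOf_lt_length_iff.mpr h.choose_spec.1) htk⟩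
    else if hlen : L.length < k then ⟨L.length, hlen⟩ else ⟨0, hk⟩
  have hCmem : ∀ (i : Fin n) (T : Finset (Fin n)), T ∈ L → i ∈ T →
      (C i).val = List.idxOf T L := by
    intro i T hT hiT
    have h : ∃ T, T ∈ L ∧ i ∈ T := ⟨T, hT, hiT⟩
    have huniq : h.choose = T := by
      by_contra hne
      have hdis : Disjoint h.choose T :=
        by haveI : Std.Symm (Disjoint : Finset (Fin n) → Finset (Fin n) → Prop) := ⟨fun a b hab => hab.symm⟩; exact List.Pairwise.forall hdisj h.choose_spec.1 hT hne
      exact (Finset.disjoint_left.mp hdis h.choose_spec.2) hiT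
    have : C i = ⟨List.idxOf h.choose L,
        lt_of_lt_of_le (List.idxOf_lt_length_iff.mpr h.choose_spec.1) htk⟩ := dif_pos h
    rw [this]
    show List.idxOf h.choose L = List.idxOf T L
    rw [huniq]
  have hcluster : ∀ (i : Fin n) (T : Finset (Fin n)), T ∈ L → i ∈ T →
      clusterOf C i = T := by
    intro i T hT hiT
    ext i'
    simp only [clusterOf, Finset.mem_filter, Finset.mem_univ, true_and]
    constructor
    · intro hEq
      have hEq' : (C i').val = (C i).val := congrArg Fin.val hEq
      have h2 : (C i).val = List.idxOf T L := hCmem i T hT hiT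
      by_cases h' : ∃ T', T' ∈ L ∧ i' ∈ T'
      · obtain ⟨T', hT', hi'T'⟩ := h'
        have h1 : (C i').val = List.idxOf T' L := hCmem i' T' hT' hi'T'
        have h3 : List.idxOf T' L = List.idxOf T L := by omega
        have : T' = T := (List.idxOf_inj hT').mp h3
        exact this ▸ hi'T'
      · exfalso
        have hCi' : C i' = if hlen : L.length < k then
            (⟨L.length, hlen⟩ : Fin k) else ⟨0, hk⟩ := dif_neg h'
        by_cases hlen : L.length < k
        · have h4 : (C i').val = L.length := by rw [hCi', dif_pos hlen]
          have h5 := List.idxOf_lt_length_iff.mpr hT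
          omega
        · have hlenk : L.length = k := le_antisymm htk (le_of_not_gt hlen)
          have h4 : (unionL L).card = k * m := by rw [hUcard, hlenk]
          have hcard : (unionL L).card = n := le_antisymm hUle (by rw [h4]; exact hnkm)
          have hUuniv : unionL L = Finset.univ :=
            Finset.eq_univ_of_card _ (by rw [hcard]; simp)
          have : i' ∈ unionL L := hUuniv ▸ Finset.mem_univ i'
          obtain ⟨T', hT', hmem⟩ := mem_unionL.mp this
          exact h' ⟨T', hT', hmem⟩
    · intro hi'
      have h1 : (C i').val = List.idxOf T L := hCmem i' T hT hi'
      have h2 : (C i).val = List.idxOf T L := hCmem i T hT hiT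
      exact Fin.ext (h1.trans h2.symm)
  refine ⟨C, ?_⟩
  rintro ⟨S, hScard, hblock⟩
  have hSm : m ≤ S.card := Nat.ceil_le.mpr hScard
  obtain ⟨i, hiS, T, hTL, hiT, hle⟩ := blocking hm2 hd hg (Finset.subset_univ S) hSm
  have hlt := hblock i hiS
  rw [hcluster i T hTL hiT] at hlt
  linarith
end

section
/- For any n agents equipped with a metric d and any number of clusters k with 1 ≤ k ≤ n, there exists a k-clustering that is in the 2-core for the maximum loss. -/
open scoped Classical

lemma le_maxOver {ι : Type*} {S : Finset ι} {f : ι → ℝ} {j : ι} (hj : j ∈ S) :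
    f j ≤ maxOver S f := by
  rw [maxOver, dif_pos ⟨j, hj⟩]
  exact Finset.le_sup' f hj

lemma maxOver_le {ι : Type*} {S : Finset ι} {f : ι → ℝ} {c : ℝ} (hS : S.Nonempty)
    (h : ∀ j ∈ S, f j ≤ c) : maxOver S f ≤ c := by
  rw [maxOver, dif_pos hS]
  exact Finset.sup'_le hS f h

lemma greedy (n k : ℕ) (hk : 1 ≤ k) (hkn : k ≤ n) (d : Fin n → Fin n → ℝ) :
    ∀ R : Finset (Fin n), ∃ (t : ℕ) (g : Fin n → ℕ),
      (∀ i ∈ R, g i < t) ∧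
      (t = 0 ∨ ((t : ℝ) - 1) * ((n : ℝ) / k) < R.card) ∧
      (∀ S ⊆ R, (n : ℝ) / k ≤ S.card →
        ∃ j ∈ S, maxLoss d j (R.filter (fun x => g x = g j)) ≤
          maxOver S (fun i => maxLoss d i S)) := by
  have hk0 : (0:ℝ) < k := by exact_mod_cast hk
  have hone : (1:ℝ) ≤ (n:ℝ)/k := by
    rw [le_div_iff₀ hk0, one_mul]
    exact_mod_cast hkn
  intro R
  induction R using Finset.strongInduction with
  | _ R IH =>
  by_cases hR : (n:ℝ)/k ≤ R.card
  · -- recursive case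
    have hcand : (R.powerset.filter fun S => (n:ℝ)/k ≤ (S.card:ℝ)).Nonempty :=
      ⟨R, by simp [Finset.mem_filter, Finset.mem_powerset, hR]⟩
    obtain ⟨S₀, hS₀mem, hS₀min⟩ :=
      Finset.exists_min_image _ (fun S => maxOver S (fun i => maxLoss d i S)) hcand
    rw [Finset.mem_filter, Finset.mem_powerset] at hS₀mem
    obtain ⟨hS₀R, hS₀card⟩ := hS₀mem
    have hS₀ne : S₀.Nonempty := by
      rw [← Finset.card_pos]
      have h1 : (1:ℝ) ≤ (S₀.card:ℝ) := le_trans hone hS₀card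
      exact_mod_cast lt_of_lt_of_le zero_lt_one h1
    have hssub : R \ S₀ ⊂ R := by
      obtain ⟨x, hx⟩ := hS₀ne
      constructor
      · exact Finset.sdiff_subset
      · intro hsub
        have := hsub (hS₀R hx)
        simp [hx] at this
    obtain ⟨t', g', hg'1, hg'2, hg'3⟩ := IH _ hssub
    refine ⟨t' + 1, fun i => if i ∈ S₀ then t' else g' i, ?_, ?_, ?_⟩
    · intro i hi
      by_cases h : i ∈ S₀
      · simp [h]
      · simp only [h, if_neg, if_false]
        have : i ∈ R \ S₀ := Finset.mem_sdiff.mpr ⟨hi, h⟩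
        exact Nat.lt_succ_of_lt (hg'1 i this)
    · right
      have hcards : ((R \ S₀).card : ℝ) = (R.card : ℝ) - S₀.card := by
        rw [Finset.card_sdiff_of_subset hS₀R]
        have := Finset.card_le_card hS₀R
        push_cast [Nat.cast_sub this]
        ring
      rcases hg'2 with h0 | hlt
      · subst h0
        simp only [Nat.cast_one, Nat.cast_add]
        have hRne : 0 < R.card := Finset.card_pos.mpr ⟨hS₀ne.choose, hS₀R hS₀ne.choose_spec⟩
        have : ((0:ℕ):ℝ) + 1 - 1 = 0 := by norm_num
        rw [Nat.cast_zero]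
        norm_num
        exact ⟨hS₀ne.choose, hS₀R hS₀ne.choose_spec⟩
      · have key : ((t':ℝ) + 1 - 1) * ((n:ℝ)/k) = ((t':ℝ) - 1) * ((n:ℝ)/k) + (n:ℝ)/k := by
          ring
        push_cast
        rw [key]
        have := hS₀card
        linarith [hcards ▸ hlt]
    · intro S hSR hScard
      by_cases hint : (S ∩ S₀).Nonempty
      · obtain ⟨j, hj⟩ := hint
        rw [Finset.mem_inter] at hj
        refine ⟨j, hj.1, ?_⟩
        have hfib : R.filter (fun x => (if x ∈ S₀ then t' else g' x) = (if j ∈ S₀ then t' else g' j)) = S₀ := by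
          ext x
          simp only [Finset.mem_filter, hj.2, if_pos]
          constructor
          · rintro ⟨hxR, hx⟩
            by_cases h : x ∈ S₀
            · exact h
            · rw [if_neg h] at hx
              have : x ∈ R \ S₀ := Finset.mem_sdiff.mpr ⟨hxR, h⟩
              exact absurd hx (Nat.ne_of_lt (hg'1 x this))
          · intro h
            exact ⟨hS₀R h, by rw [if_pos h]⟩
        rw [hfib]
        have h1 : maxLoss d j S₀ ≤ maxOver S₀ (fun i => maxLoss d i S₀) :=
          le_maxOver (f := fun i => maxLoss d i S₀) hj.2
        have h2 : maxOver S₀ (fun i => maxLoss d i S₀) ≤ maxOver S (fun i => maxLoss d i S) := by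
          apply hS₀min
          rw [Finset.mem_filter, Finset.mem_powerset]
          exact ⟨hSR, hScard⟩
        linarith
      · have hSsub : S ⊆ R \ S₀ := by
          intro x hx
          rw [Finset.mem_sdiff]
          refine ⟨hSR hx, fun hxS₀ => ?_⟩
          exact hint ⟨x, Finset.mem_inter.mpr ⟨hx, hxS₀⟩⟩
        obtain ⟨j, hjS, hj⟩ := hg'3 S hSsub hScard
        refine ⟨j, hjS, ?_⟩
        have hjR : j ∈ R \ S₀ := hSsub hjS
        have hjnS₀ : j ∉ S₀ := (Finset.mem_sdiff.mp hjR).2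
        have hfib : R.filter (fun x => (if x ∈ S₀ then t' else g' x) = (if j ∈ S₀ then t' else g' j)) =
            (R \ S₀).filter (fun x => g' x = g' j) := by
          ext x
          simp only [Finset.mem_filter, Finset.mem_sdiff, if_neg hjnS₀]
          constructor
          · rintro ⟨hxR, hx⟩
            by_cases h : x ∈ S₀
            · rw [if_pos h] at hx
              exact absurd hx.symm (Nat.ne_of_lt (hg'1 j hjR))
            · rw [if_neg h] at hx
              exact ⟨⟨hxR, h⟩, hx⟩
          · rintro ⟨⟨hxR, hxnS₀⟩, hx⟩
            exact ⟨hxR, by rw [if_neg hxnS₀]; exact hx⟩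
        rw [hfib]
        exact hj
  · -- base case
    rcases R.eq_empty_or_nonempty with hRe | hRne
    · refine ⟨0, fun _ => 0, by simp [hRe], Or.inl rfl, ?_⟩
      intro S hSR hScard
      exfalso
      rw [hRe, Finset.subset_empty] at hSR
      subst hSR
      simp at hScard
      linarith
    · refine ⟨1, fun _ => 0, fun i _ => zero_lt_one, Or.inr ?_, ?_⟩
      · norm_num
        exact hRne
      · intro S hSR hScard
        exfalso
        have := Finset.card_le_card hSR
        apply hR
        calc (n:ℝ)/k ≤ S.card := hScard
        _ ≤ R.card := by exact_mod_cast this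

/-- For any `n` agents with a metric `d` and any `k` with `1 ≤ k ≤ n`, there exists a
`k`-clustering in the `2`-core for the maximum loss. -/
theorem stmt3 (n k : ℕ) (hk : 1 ≤ k) (hkn : k ≤ n) (d : Fin n → Fin n → ℝ)
    (hd : IsPseudometric d) :
    ∃ C : Fin n → Fin k, InCore 2 (maxLoss d) C := by
  obtain ⟨_, hsymm, htri⟩ := hd
  have hk0 : (0:ℝ) < k := by exact_mod_cast hk
  have hone : (1:ℝ) ≤ (n:ℝ)/k := by
    rw [le_div_iff₀ hk0, one_mul]; exact_mod_cast hkn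
  have hn1 : 1 ≤ n := le_trans hk hkn
  obtain ⟨t, g, hg1, hg2, hg3⟩ := greedy n k hk hkn d Finset.univ
  have hi₀ : (⟨0, hn1⟩ : Fin n) ∈ (Finset.univ : Finset (Fin n)) := Finset.mem_univ _
  have ht1 : 1 ≤ t := Nat.one_le_iff_ne_zero.mpr (by
    intro h; subst h; exact Nat.not_lt_zero _ (hg1 _ hi₀))
  have htk : t ≤ k := by
    rcases hg2 with h0 | hlt
    · omega
    · rw [Finset.card_univ, Fintype.card_fin] at hlt
      have hnk : (k:ℝ) * ((n:ℝ)/k) = n := by field_simp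
      have hdiv : (0:ℝ) < (n:ℝ)/k := lt_of_lt_of_le zero_lt_one hone
      have : ((t:ℝ) - 1) * ((n:ℝ)/k) < (k:ℝ) * ((n:ℝ)/k) := by
        rw [hnk]; exact hlt
      have := (mul_lt_mul_iff_of_pos_right hdiv).mp this
      have : (t:ℝ) < (k:ℝ) + 1 := by linarith
      exact_mod_cast Nat.lt_succ_iff.mp (by exact_mod_cast this)
  refine ⟨fun i => ⟨g i, lt_of_lt_of_le (hg1 i (Finset.mem_univ i)) htk⟩, ?_⟩
  rintro ⟨S, hScard, hS⟩
  have hSne : S.Nonempty := by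
    rw [← Finset.card_pos]
    have : (1:ℝ) ≤ (S.card:ℝ) := le_trans hone hScard
    exact_mod_cast lt_of_lt_of_le zero_lt_one this
  obtain ⟨j, hjS, hj⟩ := hg3 S (Finset.subset_univ S) hScard
  have hclu : clusterOf (fun i => (⟨g i, lt_of_lt_of_le (hg1 i (Finset.mem_univ i)) htk⟩ : Fin k)) j
      = Finset.univ.filter (fun x => g x = g j) := by
    ext x
    simp [clusterOf, Fin.ext_iff]
  have hmax : maxOver S (fun i => maxLoss d i S) ≤ 2 * maxLoss d j S := by
    apply maxOver_le hSne
    intro i hi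
    apply maxOver_le hSne
    intro l hl
    have h1 : d i l ≤ d i j + d j l := htri i j l
    have h2 : d i j = d j i := hsymm i j
    have h3 : d j i ≤ maxLoss d j S := le_maxOver (f := d j) hi
    have h4 : d j l ≤ maxLoss d j S := le_maxOver (f := d j) hl
    linarith
  have hcontra := hS j hjS
  rw [hclu] at hcontra
  linarith
end

section
/- For any n agents with arbitrary nonnegative loss functions and any number of clusters k with 1 ≤ k ≤ n, there exists a k-clustering that satisfies (exact, i.e. 1-)FJR. -/
open scoped Classical

/-- Greedy-capture style construction: partition `R` into at most `j` pairwise disjoint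
clusters such that every potential deviating coalition `S ⊆ R` of size at least `m`
intersects some cluster whose max loss is at most the max loss of `S`. -/
lemma greedy_build {n : ℕ} (ℓ : Fin n → Finset (Fin n) → ℝ) (m : ℕ) (hm : 1 ≤ m) :
    ∀ r j (R : Finset (Fin n)), R.card = r → R.card ≤ j * m →
    ∃ L : List (Finset (Fin n)), L.length ≤ j ∧ (∀ T ∈ L, T ⊆ R) ∧
      L.Pairwise Disjoint ∧ (∀ i ∈ R, ∃ T ∈ L, i ∈ T) ∧
      (∀ S ⊆ R, m ≤ S.card → ∃ T ∈ L, (S ∩ T).Nonempty ∧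
        maxOver T (fun i => ℓ i T) ≤ maxOver S (fun i => ℓ i S)) := by
  intro r
  induction r using Nat.strong_induction_on with
  | _ r IH =>
    intro j R hR hRj
    by_cases hsmall : R.card < m
    · rcases R.eq_empty_or_nonempty with hRe | hRne
      · refine ⟨[], by simp, by simp, by simp, ?_, ?_⟩
        · intro i hi; simp [hRe] at hi
        · intro S hS hSc
          exfalso
          have : S.card ≤ R.card := Finset.card_le_card hS
          omega
      · have hj : 1 ≤ j := by
          by_contra hj
          have : j = 0 := by omega
          subst this
          rw [Nat.zero_mul, Nat.le_zero] at hRj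
          have := hRne.card_pos
          omega
        refine ⟨[R], by simpa, by simp, by simp, ?_, ?_⟩
        · intro i hi; exact ⟨R, by simp, hi⟩
        · intro S hS hSc
          exfalso
          have : S.card ≤ R.card := Finset.card_le_card hS
          omega
    · push_neg at hsmall
      -- choose a minimizer T₀
      have hcand : R ∈ (R.powerset).filter (fun S => m ≤ S.card) := by
        simp [Finset.mem_filter, hsmall]
      obtain ⟨T₀, hT₀mem, hT₀min⟩ :=
        Finset.exists_min_image ((R.powerset).filter (fun S => m ≤ S.card))
          (fun S => maxOver S (fun i => ℓ i S)) ⟨R, hcand⟩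
      rw [Finset.mem_filter, Finset.mem_powerset] at hT₀mem
      obtain ⟨hT₀R, hT₀card⟩ := hT₀mem
      have hT₀ne : T₀.Nonempty := Finset.card_pos.mp (by omega)
      have hj : 1 ≤ j := by
        by_contra hj
        have : j = 0 := by omega
        subst this
        rw [Nat.zero_mul, Nat.le_zero] at hRj
        omega
      set R' := R \ T₀ with hR'def
      have hR'card : R'.card = R.card - T₀.card := Finset.card_sdiff_of_subset hT₀R
      have hR'lt : R'.card < r := by
        have := hT₀ne.card_pos
        omega
      have hR'le : R'.card ≤ (j - 1) * m := by
        rw [Nat.sub_one_mul, hR'card]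
        exact tsub_le_tsub hRj hT₀card
      obtain ⟨L', hL'len, hL'sub, hL'pw, hL'cov, hL'good⟩ :=
        IH R'.card hR'lt (j - 1) R' rfl hR'le
      refine ⟨T₀ :: L', ?_, ?_, ?_, ?_, ?_⟩
      · simp only [List.length_cons]; omega
      · intro T hT
        rcases List.mem_cons.mp hT with h | h
        · subst h; exact hT₀R
        · exact (hL'sub T h).trans (Finset.sdiff_subset)
      · refine List.pairwise_cons.mpr ⟨?_, hL'pw⟩
        intro T hT
        exact Finset.disjoint_of_subset_right (hL'sub T hT) Finset.sdiff_disjoint.symm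
      · intro i hi
        by_cases hiT : i ∈ T₀
        · exact ⟨T₀, List.mem_cons_self, hiT⟩
        · obtain ⟨T, hT, hiT'⟩ := hL'cov i (Finset.mem_sdiff.mpr ⟨hi, hiT⟩)
          exact ⟨T, List.mem_cons_of_mem _ hT, hiT'⟩
      · intro S hS hSc
        by_cases hST : (S ∩ T₀).Nonempty
        · refine ⟨T₀, List.mem_cons_self, hST, ?_⟩
          exact hT₀min S (by simp [Finset.mem_filter, Finset.mem_powerset, hS, hSc])
        · have hSR' : S ⊆ R' := by
            intro x hx
            refine Finset.mem_sdiff.mpr ⟨hS hx, fun hxT => ?_⟩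
            exact hST ⟨x, Finset.mem_inter.mpr ⟨hx, hxT⟩⟩
          obtain ⟨T, hT, h1, h2⟩ := hL'good S hSR' hSc
          exact ⟨T, List.mem_cons_of_mem _ hT, h1, h2⟩

/-- For any `n` agents with arbitrary nonnegative loss functions and any `k` with
`1 ≤ k ≤ n`, there exists a `k`-clustering satisfying (exact) FJR. -/
theorem stmt5 (n k : ℕ) (hk : 1 ≤ k) (hkn : k ≤ n)
    (ℓ : Fin n → Finset (Fin n) → ℝ) (hℓ : ∀ i S, i ∈ S → 0 ≤ ℓ i S) :
    ∃ C : Fin n → Fin k, SatisfiesFJR 1 ℓ C := by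
  have hn : 1 ≤ n := hk.trans hkn
  have hkpos : (0:ℝ) < k := by exact_mod_cast hk
  set m : ℕ := ⌈(n:ℝ) / k⌉₊ with hmdef
  have hm1 : 1 ≤ m := by
    have : (0:ℝ) < (n:ℝ)/k := div_pos (by exact_mod_cast hn) hkpos
    exact Nat.ceil_pos.mpr this
  have hnkm : n ≤ k * m := by
    have h1 : (n:ℝ)/k ≤ (m:ℝ) := Nat.le_ceil _
    have h2 : (n:ℝ) ≤ (k:ℝ) * m := by
      rw [div_le_iff₀ hkpos] at h1; linarith
    exact_mod_cast h2
  obtain ⟨L, hLlen, hLsub, hLpw, hLcov, hLgood⟩ :=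
    greedy_build ℓ m hm1 (Finset.univ : Finset (Fin n)).card k Finset.univ rfl
      (by simpa using hnkm)
  -- define the clustering
  have hex : ∀ i : Fin n, ∃ t : Fin k, ∃ h : (t:ℕ) < L.length, i ∈ L.get ⟨t, h⟩ := by
    intro i
    obtain ⟨T, hT, hiT⟩ := hLcov i (Finset.mem_univ i)
    obtain ⟨t, ht⟩ := List.mem_iff_get.mp hT
    refine ⟨⟨t, lt_of_lt_of_le t.isLt hLlen⟩, t.isLt, ?_⟩
    show i ∈ L.get ⟨(t : ℕ), t.isLt⟩
    simp only [Fin.eta, ht]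
    exact hiT
  set C : Fin n → Fin k := fun i => (hex i).choose with hCdef
  have hC : ∀ i : Fin n, ∃ h : ((C i):ℕ) < L.length, i ∈ L.get ⟨C i, h⟩ :=
    fun i => (hex i).choose_spec
  have huniq : ∀ (i : Fin n) (s t : Fin L.length), i ∈ L.get s → i ∈ L.get t → s = t := by
    intro i s t hs ht
    by_contra hne
    have key : ∀ (a b : Fin L.length), a < b → i ∈ L.get a → i ∈ L.get b → False := by
      intro a b hab ha hb
      exact (Finset.disjoint_left.mp (List.pairwise_iff_get.mp hLpw a b hab)) ha hb
    rcases lt_or_gt_of_ne hne with h | h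
    · exact key s t h hs ht
    · exact key t s h ht hs
  have hclu : ∀ (i : Fin n) (h : ((C i):ℕ) < L.length),
      clusterOf C i = L.get ⟨C i, h⟩ := by
    intro i h
    ext j
    simp only [clusterOf, Finset.mem_filter, Finset.mem_univ, true_and]
    constructor
    · intro hji
      obtain ⟨hj, hjmem⟩ := hC j
      have : (⟨(C j : ℕ), hj⟩ : Fin L.length) = ⟨C i, h⟩ := by
        apply Fin.ext; simp [hji]
      rwa [this] at hjmem
    · intro hjmem
      obtain ⟨hj, hjmem'⟩ := hC j
      have := huniq j ⟨(C j : ℕ), hj⟩ ⟨C i, h⟩ hjmem' hjmem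
      have : ((C j : ℕ)) = ((C i : ℕ)) := by
        simpa using congrArg Fin.val this
      exact Fin.ext this
  refine ⟨C, ?_⟩
  rintro ⟨S, hS1, hS2⟩
  have hScard : m ≤ S.card := Nat.ceil_le.mpr hS1
  have hSne : S.Nonempty := Finset.card_pos.mp (by omega)
  obtain ⟨T, hTL, ⟨j, hjST⟩, hmax⟩ := hLgood S (Finset.subset_univ S) hScard
  rw [Finset.mem_inter] at hjST
  obtain ⟨hjS, hjT⟩ := hjST
  obtain ⟨t, ht⟩ := List.mem_iff_get.mp hTL
  obtain ⟨hj, hjmem⟩ := hC j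
  have hteq : (⟨(C j : ℕ), hj⟩ : Fin L.length) = t :=
    huniq j _ t hjmem (by rw [ht]; exact hjT)
  have hcluT : clusterOf C j = T := by
    rw [hclu j hj, hteq, ht]
  have hTne : T.Nonempty := ⟨j, hjT⟩
  have h1 : minOver S (fun j => ℓ j (clusterOf C j)) ≤ ℓ j (clusterOf C j) := by
    rw [minOver, dif_pos hSne]
    exact Finset.inf'_le _ hjS
  have h2 : ℓ j T ≤ maxOver T (fun i => ℓ i T) := by
    rw [maxOver, dif_pos hTne]
    exact Finset.le_sup' (fun i => ℓ i T) hjT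
  rw [hcluT] at h1
  rw [one_mul] at hS2
  linarith
end

section
/- Let N' be a finite set of at least τ points in a metric space (d), where τ ≥ 1. For each i ∈ N', order the points of N' by their distance to i and let r_i be the distance from i to its τ-th closest point of N' (counting i itself). Let i* minimize r_i over i ∈ N', and let S* be a set of τ closest points of N' to i*. Then, for the average loss ℓ_i(S) = (1/|S|)·Σ_{j∈S} d(i,j), the set S* is a 4-approximate solution to the Most Cohesive Cluster problem on (N', τ): max_{i∈S*} ℓ_i(S*) ≤ 4·max_{i∈S'} ℓ_i(S') for every S' ⊆ N' with |S'| ≥ τ. -/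
open scoped Classical

/-- Smallest agent ball gives a 4-approximation to the Most Cohesive Cluster problem for the
average loss: if `r i` is the distance from `i` to its `τ`-th closest point of `N'` (counting
`i` itself), `i*` minimizes `r` over `N'`, and `S*` is a set of `τ` closest points of `N'` to
`i*`, then `max_{i ∈ S*} ℓ_i(S*) ≤ 4 · max_{i ∈ S'} ℓ_i(S')` for every `S' ⊆ N'` with
`|S'| ≥ τ`, where `ℓ_i(S) = (1/|S|)·Σ_{j ∈ S} d(i,j)`. -/
theorem stmt7 {X : Type*} [MetricSpace X] (N' : Finset X) (τ : ℕ) (hτ : 1 ≤ τ)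
    (hcard : τ ≤ N'.card)
    (r : X → ℝ)
    (hr : ∀ i ∈ N', τ ≤ (N'.filter fun j => dist i j ≤ r i).card ∧
                    (N'.filter fun j => dist i j < r i).card < τ)
    (istar : X) (histar : istar ∈ N') (hmin : ∀ i ∈ N', r istar ≤ r i)
    (Sstar : Finset X) (hsub : Sstar ⊆ N') (hScard : Sstar.card = τ)
    (hclosest : ∀ j ∈ Sstar, ∀ j' ∈ N', j' ∉ Sstar → dist istar j ≤ dist istar j') :
    ∀ S' ⊆ N', τ ≤ S'.card →
      maxOver Sstar (fun i => (∑ j ∈ Sstar, dist i j) / (Sstar.card : ℝ)) ≤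
        4 * maxOver S' (fun i => (∑ j ∈ S', dist i j) / (S'.card : ℝ)) := by
  intro S' hS'sub hS'card
  have hSne : Sstar.Nonempty := Finset.card_pos.mp (by omega)
  have hS'ne : S'.Nonempty := Finset.card_pos.mp (by omega)
  -- every point of Sstar is within r istar of istar
  have hball : ∀ j ∈ Sstar, dist istar j ≤ r istar := by
    intro j0 hj0
    by_contra h
    push_neg at h
    have hsubset : (N'.filter fun j => dist istar j ≤ r istar) ⊆ Sstar.erase j0 := by
      intro j' hj'
      simp only [Finset.mem_filter] at hj'
      have hlt : dist istar j' < dist istar j0 := lt_of_le_of_lt hj'.2 h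
      have hmem : j' ∈ Sstar := by
        by_contra hn
        exact absurd (hclosest j0 hj0 j' hj'.1 hn) (not_le.mpr hlt)
      exact Finset.mem_erase.mpr ⟨fun he => by simp [he] at hlt, hmem⟩
    have h1 := (hr istar histar).1
    have h2 := Finset.card_le_card hsubset
    have h3 := Finset.card_erase_of_mem hj0
    omega
  -- upper bound on maxOver Sstar
  have hcardS : (0:ℝ) < (Sstar.card : ℝ) := by
    have : 0 < Sstar.card := by omega
    exact_mod_cast this
  have hupper : maxOver Sstar (fun i => (∑ j ∈ Sstar, dist i j) / (Sstar.card : ℝ)) ≤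
      2 * r istar := by
    rw [maxOver, dif_pos hSne]
    apply Finset.sup'_le
    intro i hi
    rw [div_le_iff₀ hcardS]
    calc ∑ j ∈ Sstar, dist i j ≤ ∑ _j ∈ Sstar, (2 * r istar) := by
          apply Finset.sum_le_sum
          intro j hj
          calc dist i j ≤ dist i istar + dist istar j := dist_triangle i istar j
            _ ≤ r istar + r istar := by
                refine add_le_add ?_ (hball j hj)
                rw [dist_comm]; exact hball i hi
            _ = 2 * r istar := by ring
      _ = (Sstar.card : ℝ) * (2 * r istar) := by rw [Finset.sum_const, nsmul_eq_mul]
      _ = 2 * r istar * (Sstar.card : ℝ) := by ring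
  -- lower bound on maxOver S'
  obtain ⟨i, hi⟩ := hS'ne
  have hiN : i ∈ N' := hS'sub hi
  obtain ⟨j, hj, hjd⟩ : ∃ j ∈ S', r istar ≤ dist i j := by
    have h2 := (hr i hiN).2
    have hns : ¬ S' ⊆ N'.filter (fun j => dist i j < r i) := by
      intro hsub'
      have := Finset.card_le_card hsub'
      omega
    obtain ⟨j, hj, hjn⟩ := Finset.not_subset.mp hns
    refine ⟨j, hj, ?_⟩
    have hnl : ¬ dist i j < r i := fun hlt => hjn (Finset.mem_filter.mpr ⟨hS'sub hj, hlt⟩)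
    exact le_trans (hmin i hiN) (not_lt.mp hnl)
  have hcardS' : (0:ℝ) < (S'.card : ℝ) := by
    have : 0 < S'.card := by omega
    exact_mod_cast this
  set M := maxOver S' (fun i => (∑ j ∈ S', dist i j) / (S'.card : ℝ)) with hMdef
  have hM : ∀ k ∈ S', (∑ l ∈ S', dist k l) / (S'.card : ℝ) ≤ M := by
    intro k hk
    rw [hMdef, maxOver, dif_pos ⟨i, hi⟩]
    exact Finset.le_sup' (fun i => (∑ j ∈ S', dist i j) / (S'.card : ℝ)) hk
  have hsum : (S'.card : ℝ) * r istar ≤ (∑ k ∈ S', dist i k) + (∑ k ∈ S', dist j k) := by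
    calc (S'.card : ℝ) * r istar = ∑ _k ∈ S', r istar := by
          rw [Finset.sum_const, nsmul_eq_mul]
      _ ≤ ∑ k ∈ S', (dist i k + dist j k) := by
          apply Finset.sum_le_sum
          intro k _
          calc r istar ≤ dist i j := hjd
            _ ≤ dist i k + dist k j := dist_triangle i k j
            _ = dist i k + dist j k := by rw [dist_comm k j]
      _ = _ := Finset.sum_add_distrib
  have hlow : r istar ≤ 2 * M := by
    have h1 : r istar ≤ ((∑ k ∈ S', dist i k) + (∑ k ∈ S', dist j k)) / (S'.card : ℝ) := by
      rw [le_div_iff₀ hcardS']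
      linarith [hsum]
    have h2 : ((∑ k ∈ S', dist i k) + (∑ k ∈ S', dist j k)) / (S'.card : ℝ)
        = (∑ k ∈ S', dist i k) / (S'.card : ℝ) + (∑ k ∈ S', dist j k) / (S'.card : ℝ) := by
      ring
    have := hM i hi
    have := hM j hj
    linarith [h1, h2.le]
  linarith [hupper, hlow]
end

section
/- For any n agents equipped with a metric d, any number of clusters k with 1 ≤ k ≤ n, and any δ > 1, there exists a k-clustering C that is in the (2δ/(δ−1), δ)-core for the average loss; that is, there is no group S ⊆ N with |S| ≥ δ·n/k such that (2δ/(δ−1))·ℓ_i(S) < ℓ_i(C(i)) for all i ∈ S. -/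
open scoped Classical

namespace Greedy


variable {n : ℕ} (d : Fin n → Fin n → ℝ) (m₀ : ℕ)

noncomputable def ball (x : Fin n) (r : ℝ) (R : Finset (Fin n)) : Finset (Fin n) :=
  R.filter fun j => d x j ≤ r

lemma mem_ball {x : Fin n} {r R j} : j ∈ ball d x r R ↔ j ∈ R ∧ d x j ≤ r :=
  Finset.mem_filter

noncomputable def cand (R : Finset (Fin n)) : Finset (Fin n × Fin n) :=
  (R ×ˢ R).filter fun p => m₀ ≤ (ball d p.1 (d p.1 p.2) R).card

lemma cand_nonempty {R : Finset (Fin n)} (hm : 0 < m₀) (h : m₀ ≤ R.card) :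
    (cand d m₀ R).Nonempty := by
  obtain ⟨x, hx⟩ := Finset.card_pos.mp (lt_of_lt_of_le hm h)
  obtain ⟨j, hj, hjmax⟩ := Finset.exists_max_image R (d x) ⟨x, hx⟩
  refine ⟨(x, j), Finset.mem_filter.mpr ⟨Finset.mem_product.mpr ⟨hx, hj⟩, ?_⟩⟩
  have hball : R ⊆ ball d x (d x j) R := fun l hl =>
    (mem_ball d).mpr ⟨hl, hjmax l hl⟩
  exact le_trans h (Finset.card_le_card hball)

noncomputable def pick (R : Finset (Fin n)) (h : (cand d m₀ R).Nonempty) : Fin n × Fin n :=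
  (Finset.exists_min_image (cand d m₀ R) (fun p => d p.1 p.2) h).choose

lemma pick_spec (R : Finset (Fin n)) (h : (cand d m₀ R).Nonempty) :
    pick d m₀ R h ∈ cand d m₀ R ∧
      ∀ p ∈ cand d m₀ R, d (pick d m₀ R h).1 (pick d m₀ R h).2 ≤ d p.1 p.2 :=
  (Finset.exists_min_image (cand d m₀ R) (fun p => d p.1 p.2) h).choose_spec

noncomputable def rad (R : Finset (Fin n)) (h : (cand d m₀ R).Nonempty) : ℝ :=
  d (pick d m₀ R h).1 (pick d m₀ R h).2

noncomputable def clusterB (R : Finset (Fin n)) (h : (cand d m₀ R).Nonempty) :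
    Finset (Fin n) :=
  ball d (pick d m₀ R h).1 (rad d m₀ R h) R

lemma ctr_mem (R : Finset (Fin n)) (h) : (pick d m₀ R h).1 ∈ R := by
  have := (pick_spec d m₀ R h).1
  exact (Finset.mem_product.mp (Finset.mem_filter.mp this).1).1

lemma clusterB_card (R : Finset (Fin n)) (h) : m₀ ≤ (clusterB d m₀ R h).card := by
  have := (pick_spec d m₀ R h).1
  exact (Finset.mem_filter.mp this).2

lemma clusterB_subset (R : Finset (Fin n)) (h) : clusterB d m₀ R h ⊆ R :=
  Finset.filter_subset _ _

lemma clusterB_dist (R : Finset (Fin n)) (h) {j} (hj : j ∈ clusterB d m₀ R h) :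
    d (pick d m₀ R h).1 j ≤ rad d m₀ R h :=
  ((mem_ball d).mp hj).2

lemma ctr_mem_clusterB (hd0 : ∀ i, d i i = 0) (hdnn : ∀ i j, 0 ≤ d i j)
    (R : Finset (Fin n)) (h) : (pick d m₀ R h).1 ∈ clusterB d m₀ R h :=
  (mem_ball d).mpr ⟨ctr_mem d m₀ R h, by rw [hd0]; exact hdnn _ _⟩

lemma rad_min (hm : 0 < m₀) (R : Finset (Fin n)) (h) {y : Fin n} {r : ℝ}
    (hy : y ∈ R) (hr : m₀ ≤ (ball d y r R).card) : rad d m₀ R h ≤ r := by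
  obtain ⟨j₀, hj₀, hj₀max⟩ := Finset.exists_max_image (ball d y r R) (d y)
    (Finset.card_pos.mp (lt_of_lt_of_le hm hr))
  have hsub : ball d y r R ⊆ ball d y (d y j₀) R := fun l hl =>
    (mem_ball d).mpr ⟨((mem_ball d).mp hl).1, hj₀max l hl⟩
  have hcand : (y, j₀) ∈ cand d m₀ R :=
    Finset.mem_filter.mpr ⟨Finset.mem_product.mpr ⟨hy, ((mem_ball d).mp hj₀).1⟩,
      le_trans hr (Finset.card_le_card hsub)⟩
  exact le_trans ((pick_spec d m₀ R h).2 _ hcand) ((mem_ball d).mp hj₀).2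

noncomputable def gcAux (hd0 : ∀ i, d i i = 0) (hdnn : ∀ i j, 0 ≤ d i j) (hm : 0 < m₀) :
    (N : ℕ) → (R : Finset (Fin n)) → R.card ≤ N → List (Finset (Fin n))
  | 0, _, _ => []
  | N + 1, R, h =>
    if hR : m₀ ≤ R.card then
      clusterB d m₀ R (cand_nonempty d m₀ hm hR) ::
        gcAux hd0 hdnn hm N (R \ clusterB d m₀ R (cand_nonempty d m₀ hm hR)) (by
          have hx := ctr_mem_clusterB d m₀ hd0 hdnn R (cand_nonempty d m₀ hm hR)
          have hss := Finset.sdiff_ssubset (clusterB_subset d m₀ R (cand_nonempty d m₀ hm hR))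
            ⟨_, hx⟩
          exact Nat.lt_succ_iff.mp (lt_of_lt_of_le (Finset.card_lt_card hss) h))
    else if R = ∅ then [] else [R]

variable (hd0 : ∀ i, d i i = 0) (hdnn : ∀ i j, 0 ≤ d i j) (hm : 0 < m₀)

lemma gc_subset : ∀ (N : ℕ) (R : Finset (Fin n)) (h : R.card ≤ N),
    ∀ B ∈ gcAux d m₀ hd0 hdnn hm N R h, B ⊆ R := by
  intro N
  induction N with
  | zero => intro R h B hB; simp [gcAux] at hB
  | succ N ih =>
    intro R h B hB
    rw [gcAux] at hB
    by_cases hR : m₀ ≤ R.card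
    · rw [dif_pos hR] at hB
      rcases List.mem_cons.mp hB with hB | hB
      · rw [hB]; exact clusterB_subset d m₀ R _
      · exact (ih _ _ B hB).trans (Finset.sdiff_subset)
    · rw [dif_neg hR] at hB
      by_cases hRe : R = ∅
      · simp [hRe] at hB
      · rw [if_neg hRe] at hB
        simp at hB; rw [hB]

lemma gc_disjoint : ∀ (N : ℕ) (R : Finset (Fin n)) (h : R.card ≤ N),
    (gcAux d m₀ hd0 hdnn hm N R h).Pairwise Disjoint := by
  intro N
  induction N with
  | zero => intro R h; simp [gcAux]
  | succ N ih =>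
    intro R h
    rw [gcAux]
    by_cases hR : m₀ ≤ R.card
    · rw [dif_pos hR]
      refine List.Pairwise.cons ?_ (ih _ _)
      intro B hB
      have hsub := gc_subset d m₀ hd0 hdnn hm _ _ _ B hB
      exact Finset.disjoint_of_subset_right hsub Finset.disjoint_sdiff
    · rw [dif_neg hR]
      by_cases hRe : R = ∅ <;> simp [hRe]

lemma gc_cover : ∀ (N : ℕ) (R : Finset (Fin n)) (h : R.card ≤ N),
    ∀ i ∈ R, ∃ B ∈ gcAux d m₀ hd0 hdnn hm N R h, i ∈ B := by
  intro N
  induction N with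
  | zero =>
    intro R h i hi
    have : R = ∅ := Finset.card_eq_zero.mp (Nat.le_zero.mp h)
    simp [this] at hi
  | succ N ih =>
    intro R h i hi
    rw [gcAux]
    by_cases hR : m₀ ≤ R.card
    · rw [dif_pos hR]
      by_cases hiB : i ∈ clusterB d m₀ R (cand_nonempty d m₀ hm hR)
      · exact ⟨_, List.mem_cons_self, hiB⟩
      · obtain ⟨B, hB, hiB'⟩ := ih _ _ i (Finset.mem_sdiff.mpr ⟨hi, hiB⟩)
        exact ⟨B, List.mem_cons_of_mem _ hB, hiB'⟩
    · rw [dif_neg hR]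
      have hRe : R ≠ ∅ := fun he => by simp [he] at hi
      rw [if_neg hRe]
      exact ⟨R, List.mem_singleton_self _, hi⟩

lemma gc_len : ∀ (N : ℕ) (R : Finset (Fin n)) (h : R.card ≤ N),
    (gcAux d m₀ hd0 hdnn hm N R h).length * m₀ < R.card + m₀ := by
  intro N
  induction N with
  | zero => intro R h; simp [gcAux]; omega
  | succ N ih =>
    intro R h
    rw [gcAux]
    by_cases hR : m₀ ≤ R.card
    · rw [dif_pos hR]
      set B := clusterB d m₀ R (cand_nonempty d m₀ hm hR) with hBdef
      have hBsub := clusterB_subset d m₀ R (cand_nonempty d m₀ hm hR)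
      have hBcard := clusterB_card d m₀ R (cand_nonempty d m₀ hm hR)
      have hN : (R \ B).card ≤ N := by
        have hx := ctr_mem_clusterB d m₀ hd0 hdnn R (cand_nonempty d m₀ hm hR)
        have hss := Finset.sdiff_ssubset hBsub ⟨_, hx⟩
        exact Nat.lt_succ_iff.mp (lt_of_lt_of_le (Finset.card_lt_card hss) h)
      have hrec := ih (R \ B) hN
      have hcard : (R \ B).card = R.card - B.card := Finset.card_sdiff_of_subset hBsub
      have hBR : B.card ≤ R.card := Finset.card_le_card hBsub
      have hBcard' : m₀ ≤ B.card := hBcard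
      simp only [List.length_cons]
      have hgoal : ((gcAux d m₀ hd0 hdnn hm N (R \ B) hN).length + 1) * m₀
          < R.card + m₀ := by
        have hmul : ((gcAux d m₀ hd0 hdnn hm N (R \ B) hN).length + 1) * m₀
            = (gcAux d m₀ hd0 hdnn hm N (R \ B) hN).length * m₀ + m₀ := by ring
        omega
      exact hgoal
    · rw [dif_neg hR]
      by_cases hRe : R = ∅
      · rw [if_pos hRe]; simp only [List.length_nil, Nat.zero_mul]; omega
      · rw [if_neg hRe]
        have : 0 < R.card := Finset.card_pos.mpr (Finset.nonempty_iff_ne_empty.mpr hRe)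
        simp only [List.length_singleton, one_mul]
        omega

lemma gc_main (c : ℝ) (hdsymm : ∀ i j, d i j = d j i)
    (hdtri : ∀ i j l, d i l ≤ d i j + d j l) :
    ∀ (N : ℕ) (R : Finset (Fin n)) (h : R.card ≤ N) (S : Finset (Fin n)),
    S ⊆ R → m₀ ≤ S.card →
    (∀ j ∈ S, m₀ ≤ (S.filter (fun l => d j l ≤ c * avgLoss d j S)).card) →
    ∃ i ∈ S, ∃ B ∈ gcAux d m₀ hd0 hdnn hm N R h, i ∈ B ∧
      avgLoss d i B ≤ 2 * (c * avgLoss d i S) := by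
  intro N
  induction N with
  | zero =>
    intro R h S hSR hScard _
    exfalso
    have : R = ∅ := Finset.card_eq_zero.mp (Nat.le_zero.mp h)
    subst this
    have : S = ∅ := Finset.subset_empty.mp hSR
    subst this
    simp at hScard; omega
  | succ N ih =>
    intro R h S hSR hScard hMarkov
    have hR : m₀ ≤ R.card := le_trans hScard (Finset.card_le_card hSR)
    rw [gcAux, dif_pos hR]
    set hP := cand_nonempty d m₀ hm hR with hPdef
    set B := clusterB d m₀ R hP with hBdef
    by_cases hBS : (B ∩ S).Nonempty
    · obtain ⟨i, hiBS⟩ := hBS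
      have hiB : i ∈ B := (Finset.mem_inter.mp hiBS).1
      have hiS : i ∈ S := (Finset.mem_inter.mp hiBS).2
      refine ⟨i, hiS, B, List.mem_cons_self, hiB, ?_⟩
      -- radius bound
      have hrmin : rad d m₀ R hP ≤ c * avgLoss d i S := by
        apply rad_min d m₀ hm R hP (hSR hiS)
        refine le_trans (hMarkov i hiS) (Finset.card_le_card ?_)
        intro l hl
        have hl' := Finset.mem_filter.mp hl
        exact (mem_ball d).mpr ⟨hSR hl'.1, hl'.2⟩
      -- avg loss bound
      set x := (pick d m₀ R hP).1 with hxdef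
      have hBne : (0:ℝ) < B.card :=
        Nat.cast_pos.mpr (Finset.card_pos.mpr ⟨i, hiB⟩)
      have hdx : d i x ≤ rad d m₀ R hP := by
        rw [hdsymm]
        exact clusterB_dist d m₀ R hP hiB
      have hsum : ∑ j ∈ B, d i j ≤ B.card * (2 * rad d m₀ R hP) := by
        calc ∑ j ∈ B, d i j ≤ ∑ j ∈ B, (2 * rad d m₀ R hP) := by
              apply Finset.sum_le_sum
              intro j hj
              calc d i j ≤ d i x + d x j := hdtri i x j
                _ ≤ rad d m₀ R hP + rad d m₀ R hP :=
                    add_le_add hdx (clusterB_dist d m₀ R hP hj)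
                _ = 2 * rad d m₀ R hP := by ring
          _ = B.card * (2 * rad d m₀ R hP) := by
              rw [Finset.sum_const, nsmul_eq_mul]
      have : avgLoss d i B ≤ 2 * rad d m₀ R hP := by
        rw [avgLoss, div_le_iff₀ hBne]
        linarith [hsum]
      linarith [this, hrmin]
    · have hSsub : S ⊆ R \ B := by
        intro l hl
        refine Finset.mem_sdiff.mpr ⟨hSR hl, fun hlB => ?_⟩
        exact hBS ⟨l, Finset.mem_inter.mpr ⟨hlB, hl⟩⟩
      obtain ⟨i, hiS, B', hB', hrest⟩ := ih _ _ S hSsub hScard hMarkov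
      exact ⟨i, hiS, B', List.mem_cons_of_mem _ hB', hrest⟩

end Greedy

lemma exists_assignment {n k : ℕ} (L : List (Finset (Fin n)))
    (hcov : ∀ i : Fin n, ∃ B ∈ L, i ∈ B) (hdisj : L.Pairwise Disjoint)
    (htk : L.length ≤ k) :
    ∃ C : Fin n → Fin k, ∀ (i : Fin n) (B : Finset (Fin n)), B ∈ L → i ∈ B →
      clusterOf C i = B := by
  have uniq : ∀ (a : Fin n) (p q : ℕ) (hp : p < L.length) (hq : q < L.length),
      a ∈ L[p] → a ∈ L[q] → p = q := by
    intro a p q hp hq hap haq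
    rcases lt_trichotomy p q with h | h | h
    · exact absurd haq (Finset.disjoint_left.mp
        (List.pairwise_iff_getElem.mp hdisj p q hp hq h) hap)
    · exact h
    · exact absurd hap (Finset.disjoint_left.mp
        (List.pairwise_iff_getElem.mp hdisj q p hq hp h) haq)
  have hgl : ∀ (p q : ℕ) (hp : p < L.length) (hq : q < L.length), p = q →
      L[p] = L[q] := by intro p q hp hq h; subst h; rfl
  set idx : Fin n → ℕ := fun i => L.findIdx (fun B => decide (i ∈ B)) with hidx
  have hlt : ∀ i, idx i < L.length := by
    intro i
    apply List.findIdx_lt_length_of_exists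
    obtain ⟨B, hB, hiB⟩ := hcov i
    exact ⟨B, hB, by simpa using hiB⟩
  have memidx : ∀ i, i ∈ L[idx i]'(hlt i) := by
    intro i
    have := List.findIdx_getElem (w := hlt i)
    simpa using this
  refine ⟨fun i => ⟨idx i, lt_of_lt_of_le (hlt i) htk⟩, ?_⟩
  intro i B hB hiB
  obtain ⟨q, hq, hqB⟩ := List.mem_iff_getElem.mp hB
  have hiLq : i ∈ L[q] := by rw [hqB]; exact hiB
  have hqi : q = idx i := uniq i q (idx i) hq (hlt i) hiLq (memidx i)
  ext j
  simp only [clusterOf, Finset.mem_filter, Finset.mem_univ, true_and, Fin.mk.injEq]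
  constructor
  · intro hji
    rw [← hqB]
    have hLeq : L[idx j]'(hlt j) = L[q] := hgl _ _ (hlt j) hq (by omega)
    rw [← hLeq]
    exact memidx j
  · intro hjB
    have hjLq : j ∈ L[q] := by rw [hqB]; exact hjB
    have := uniq j q (idx j) hq (hlt j) hjLq (memidx j)
    omega

/-- Bicriteria core approximation: for any `n` agents with a metric `d`, any `k` with
`1 ≤ k ≤ n`, and any `δ > 1`, there is a `k`-clustering `C` in the `(2δ/(δ−1), δ)`-core for
the average loss — no group `S` with `|S| ≥ δ·n/k` has `(2δ/(δ−1))·ℓ_i(S) < ℓ_i(C(i))` for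
all `i ∈ S`. -/
theorem stmt13 (n k : ℕ) (hk : 1 ≤ k) (hkn : k ≤ n) (d : Fin n → Fin n → ℝ)
    (hd : IsPseudometric d) (δ : ℝ) (hδ : 1 < δ) :
    ∃ C : Fin n → Fin k,
      ¬ ∃ S : Finset (Fin n), δ * (n : ℝ) / k ≤ S.card ∧
          ∀ i ∈ S, (2 * δ / (δ - 1)) * avgLoss d i S < avgLoss d i (clusterOf C i) := by
  obtain ⟨hd0, hdsymm, hdtri⟩ := hd
  have hdnn : ∀ i j, 0 ≤ d i j := by
    intro i j
    have h := hdtri i j i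
    rw [hd0 i, hdsymm j i] at h
    linarith
  have hk0 : 0 < k := hk
  have hn0 : 0 < n := lt_of_lt_of_le hk0 hkn
  have hkR : (0:ℝ) < k := Nat.cast_pos.mpr hk0
  have hnR : (0:ℝ) < n := Nat.cast_pos.mpr hn0
  have hnk : (0:ℝ) < (n:ℝ)/k := div_pos hnR hkR
  set m₀ : ℕ := ⌈(n:ℝ)/k⌉₊ with hm₀def
  have hm : 0 < m₀ := Nat.ceil_pos.mpr hnk
  have hδ1 : (0:ℝ) < δ - 1 := by linarith
  have hδ0 : (0:ℝ) < δ := by linarith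
  set c : ℝ := δ/(δ-1) with hcdef
  have hc : 0 < c := div_pos hδ0 hδ1
  have huniv : (Finset.univ : Finset (Fin n)).card ≤ n := by
    simp [Finset.card_univ]
  set L := Greedy.gcAux d m₀ hd0 hdnn hm n Finset.univ huniv with hLdef
  have hlen := Greedy.gc_len d m₀ hd0 hdnn hm n Finset.univ huniv
  rw [Finset.card_univ, Fintype.card_fin, ← hLdef] at hlen
  have hkm : n ≤ k * m₀ := by
    have h1 : (n:ℝ)/k ≤ m₀ := Nat.le_ceil _
    rw [div_le_iff₀ hkR] at h1
    have h2 : (n:ℝ) ≤ ((k * m₀ : ℕ) : ℝ) := by push_cast; linarith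
    exact_mod_cast h2
  have htk : L.length ≤ k := by
    have h3 : L.length * m₀ < (k+1) * m₀ := by
      have : (k+1) * m₀ = k * m₀ + m₀ := by ring
      omega
    exact Nat.lt_succ_iff.mp (Nat.lt_of_mul_lt_mul_right h3)
  have hcov : ∀ i : Fin n, ∃ B ∈ L, i ∈ B := fun i =>
    Greedy.gc_cover d m₀ hd0 hdnn hm n Finset.univ huniv i (Finset.mem_univ i)
  have hdisj : L.Pairwise Disjoint :=
    Greedy.gc_disjoint d m₀ hd0 hdnn hm n Finset.univ huniv
  obtain ⟨C, hC⟩ := exists_assignment L hcov hdisj htk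
  refine ⟨C, ?_⟩
  rintro ⟨S, hS1, hS2⟩
  have hSpos : (n:ℝ)/k < S.card := by
    have h2 : (n:ℝ)/k < δ * (n:ℝ)/k := by
      rw [mul_div_assoc]
      nlinarith [hnk]
    linarith
  have hScard : m₀ ≤ S.card := Nat.ceil_le.mpr (le_of_lt hSpos)
  have hSneR : (0:ℝ) < S.card := lt_trans hnk hSpos
  have hMarkov : ∀ j ∈ S, m₀ ≤ (S.filter (fun l => d j l ≤ c * avgLoss d j S)).card := by
    intro j hj
    apply Nat.ceil_le.mpr
    set ℓ := avgLoss d j S with hℓdef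
    have hℓnn : 0 ≤ ℓ := by
      rw [hℓdef, avgLoss]
      exact div_nonneg (Finset.sum_nonneg fun l _ => hdnn j l) (Nat.cast_nonneg _)
    have hsumS : ∑ l ∈ S, d j l = (S.card : ℝ) * ℓ := by
      rw [hℓdef, avgLoss]
      field_simp
    by_cases hℓ0 : ℓ = 0
    · have hall : ∀ l ∈ S, d j l = 0 := by
        have h0 : ∑ l ∈ S, d j l = 0 := by rw [hsumS, hℓ0]; ring
        exact fun l hl =>
          (Finset.sum_eq_zero_iff_of_nonneg (fun l _ => hdnn j l)).mp h0 l hl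
      have hfe : S.filter (fun l => d j l ≤ c * ℓ) = S := by
        apply Finset.filter_true_of_mem
        intro l hl
        rw [hall l hl, hℓ0, mul_zero]
      rw [hfe]
      exact le_of_lt hSpos
    · have hℓpos : 0 < ℓ := lt_of_le_of_ne hℓnn (Ne.symm hℓ0)
      set T := S.filter (fun l => d j l ≤ c * ℓ) with hTdef
      have hTS : T ⊆ S := Finset.filter_subset _ _
      have hUsum : (S \ T).card • (c * ℓ) ≤ ∑ l ∈ S \ T, d j l := by
        apply Finset.card_nsmul_le_sum
        intro l hl
        have hl1 := Finset.mem_sdiff.mp hl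
        have : ¬ (d j l ≤ c * ℓ) := fun hle =>
          hl1.2 (Finset.mem_filter.mpr ⟨hl1.1, hle⟩)
        linarith [lt_of_not_ge this]
      have hUS : ∑ l ∈ S \ T, d j l ≤ ∑ l ∈ S, d j l :=
        Finset.sum_le_sum_of_subset_of_nonneg (Finset.sdiff_subset)
          (fun l _ _ => hdnn j l)
      have h1 : ((S \ T).card : ℝ) * (c * ℓ) ≤ (S.card : ℝ) * ℓ := by
        rw [← hsumS]
        calc ((S \ T).card : ℝ) * (c * ℓ) = (S \ T).card • (c * ℓ) := by
              rw [nsmul_eq_mul]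
          _ ≤ ∑ l ∈ S \ T, d j l := hUsum
          _ ≤ ∑ l ∈ S, d j l := hUS
      have hcards : ((S \ T).card : ℝ) = (S.card : ℝ) - (T.card : ℝ) := by
        rw [Finset.card_sdiff_of_subset hTS]
        have := Finset.card_le_card hTS
        push_cast [Nat.cast_sub this]
        ring
      have hu : ((S \ T).card : ℝ) * c ≤ (S.card : ℝ) := by
        have h2 : ((S \ T).card : ℝ) * c * ℓ ≤ (S.card : ℝ) * ℓ := by
          calc ((S \ T).card : ℝ) * c * ℓ = ((S \ T).card : ℝ) * (c * ℓ) := by ring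
            _ ≤ (S.card : ℝ) * ℓ := h1
        exact le_of_mul_le_mul_right h2 hℓpos
      -- T.card ≥ S.card / δ ≥ n/k
      have hdiv : ((S \ T).card : ℝ) ≤ (S.card : ℝ) * (δ - 1) / δ := by
        rw [le_div_iff₀ hδ0]
        have h3 : ((S \ T).card : ℝ) * δ = ((S \ T).card : ℝ) * c * (δ - 1) := by
          rw [hcdef]
          field_simp
        rw [h3]
        apply mul_le_mul_of_nonneg_right hu (le_of_lt hδ1)
      have h4 : (S.card : ℝ) - (S.card : ℝ) * (δ - 1) / δ = (S.card : ℝ) / δ := by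
        field_simp
        ring
      have h5 : (S.card : ℝ) / δ ≤ (T.card : ℝ) := by
        have := hcards
        linarith [hdiv]
      have h6 : (n:ℝ)/k ≤ (S.card : ℝ) / δ := by
        rw [div_le_div_iff₀ hkR hδ0] at *
        have h7 : δ * (n:ℝ) / k ≤ (S.card : ℝ) := hS1
        rw [div_le_iff₀ hkR] at h7
        nlinarith [h7]
      linarith
  obtain ⟨i, hiS, B, hBL, hiB, hbound⟩ :=
    Greedy.gc_main d m₀ hd0 hdnn hm c hdsymm hdtri n Finset.univ huniv S
      (Finset.subset_univ S) hScard hMarkov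
  have hcl := hC i B hBL hiB
  have hlt := hS2 i hiS
  rw [hcl] at hlt
  have heq : 2 * (c * avgLoss d i S) = (2 * δ / (δ - 1)) * avgLoss d i S := by
    rw [hcdef]
    ring
  linarith
end

section
/- Suppose the n agents are points on the real line, i.e., each agent i has a position x_i ∈ ℝ and d(i,j) = |x_i − x_j|. Then for any number of clusters k with 1 ≤ k ≤ n, there exists a k-clustering that is in the (exact, i.e. 1-)core for the maximum loss. -/
open scoped Classical

namespace Stmt14Aux


variable {n : ℕ}

lemma mls_mem {x : Fin n → ℝ} {S : Finset (Fin n)} {i j : Fin n} (hj : j ∈ S) :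
    |x i - x j| ≤ maxLoss (fun a b => |x a - x b|) i S := by
  have hS : S.Nonempty := ⟨j, hj⟩
  simp only [maxLoss, maxOver, dif_pos hS]
  exact Finset.le_sup' (fun j => |x i - x j|) hj

lemma mls_le {x : Fin n → ℝ} {S : Finset (Fin n)} {i : Fin n} (hS : S.Nonempty)
    {c : ℝ} (h : ∀ j ∈ S, |x i - x j| ≤ c) :
    maxLoss (fun a b => |x a - x b|) i S ≤ c := by
  simp only [maxLoss, maxOver, dif_pos hS]
  exact Finset.sup'_le _ _ h

lemma key (x : Fin n → ℝ) (m : ℕ) (R : Finset (Fin n)) (hm : 1 ≤ m) (hR : m ≤ R.card) :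
    ∃ W : Finset (Fin n), W ⊆ R ∧ m ≤ W.card ∧
      ∀ S : Finset (Fin n), S ⊆ R → m ≤ S.card → ∀ i0 ∈ S, i0 ∈ W →
        ∃ i ∈ S, i ∈ W ∧
          maxLoss (fun a b => |x a - x b|) i W ≤ maxLoss (fun a b => |x a - x b|) i S := by
  have hRne : R.Nonempty := Finset.card_pos.mp (lt_of_lt_of_le hm hR)
  obtain ⟨a0, ha0R, ha0⟩ := R.exists_min_image x hRne
  obtain ⟨b0, hb0R, hb0⟩ := R.exists_max_image x hRne
  set T := (R ×ˢ R).filter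
      (fun p => m ≤ (R.filter fun i => x p.1 ≤ x i ∧ x i ≤ x p.2).card) with hT
  have hTne : T.Nonempty := by
    refine ⟨(a0, b0), ?_⟩
    simp only [hT, Finset.mem_filter, Finset.mem_product]
    refine ⟨⟨ha0R, hb0R⟩, ?_⟩
    have heq : R.filter (fun i => x a0 ≤ x i ∧ x i ≤ x b0) = R :=
      Finset.filter_true_of_mem (fun i hi => ⟨ha0 i hi, hb0 i hi⟩)
    rw [heq]; exact hR
  obtain ⟨p, hpT, hpmin⟩ := T.exists_min_image (fun p => x p.2 - x p.1) hTne
  rw [hT, Finset.mem_filter] at hpT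
  obtain ⟨_, hpcard⟩ := hpT
  set W := R.filter (fun i => x p.1 ≤ x i ∧ x i ≤ x p.2) with hWdef
  refine ⟨W, Finset.filter_subset _ _, hpcard, ?_⟩
  intro S hSR hScard i0 hi0S hi0W
  by_contra hcon
  push_neg at hcon
  have hSne : S.Nonempty := ⟨i0, hi0S⟩
  obtain ⟨u, huS, hu⟩ := S.exists_min_image x hSne
  obtain ⟨v, hvS, hv⟩ := S.exists_max_image x hSne
  have hd : x p.2 - x p.1 ≤ x v - x u := by
    have hTuv : (u, v) ∈ T := by
      simp only [hT, Finset.mem_filter, Finset.mem_product]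
      refine ⟨⟨hSR huS, hSR hvS⟩, le_trans hScard (Finset.card_le_card ?_)⟩
      intro j hj
      exact Finset.mem_filter.mpr ⟨hSR hj, hu j hj, hv j hj⟩
    exact hpmin (u, v) hTuv
  obtain ⟨-, hi0a, hi0b⟩ := Finset.mem_filter.mp hi0W
  by_cases hcase : x p.1 ≤ x u
  · have huW : u ∈ W :=
      Finset.mem_filter.mpr ⟨hSR huS, hcase, le_trans (hu i0 hi0S) hi0b⟩
    have h1 := hcon u huS huW
    have h2 : maxLoss (fun a b => |x a - x b|) u W ≤ x p.2 - x p.1 := by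
      refine mls_le ⟨u, huW⟩ ?_
      intro j hj
      obtain ⟨-, hja, hjb⟩ := Finset.mem_filter.mp hj
      rw [abs_sub_le_iff]
      have hub : x u ≤ x p.2 := le_trans (hu i0 hi0S) hi0b
      constructor <;> linarith
    have h3 : x v - x u ≤ maxLoss (fun a b => |x a - x b|) u S := by
      refine le_trans ?_ (mls_mem hvS)
      rw [abs_sub_comm]
      exact le_abs_self _
    linarith
  · push_neg at hcase
    by_cases hc2 : x p.2 ≤ x v
    · have hA : x i0 - x u ≤ maxLoss (fun a b => |x a - x b|) i0 S :=
        le_trans (le_abs_self _) (mls_mem huS)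
      have hB : x v - x i0 ≤ maxLoss (fun a b => |x a - x b|) i0 S := by
        refine le_trans ?_ (mls_mem hvS)
        rw [abs_sub_comm]
        exact le_abs_self _
      have h2 : maxLoss (fun a b => |x a - x b|) i0 W ≤
          maxLoss (fun a b => |x a - x b|) i0 S := by
        refine mls_le ⟨i0, hi0W⟩ ?_
        intro j hj
        obtain ⟨-, hja, hjb⟩ := Finset.mem_filter.mp hj
        rw [abs_sub_le_iff]
        constructor <;> linarith
      have h1 := hcon i0 hi0S hi0W
      linarith
    · push_neg at hc2
      have hvW : v ∈ W :=
        Finset.mem_filter.mpr ⟨hSR hvS, le_trans hi0a (hv i0 hi0S), le_of_lt hc2⟩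
      have h1 := hcon v hvS hvW
      have h2 : maxLoss (fun a b => |x a - x b|) v W ≤ x p.2 - x p.1 := by
        refine mls_le ⟨v, hvW⟩ ?_
        intro j hj
        obtain ⟨-, hja, hjb⟩ := Finset.mem_filter.mp hj
        rw [abs_sub_le_iff]
        have hva : x p.1 ≤ x v := le_trans hi0a (hv i0 hi0S)
        constructor <;> linarith
      have h3 : x v - x u ≤ maxLoss (fun a b => |x a - x b|) v S :=
        le_trans (le_abs_self _) (mls_mem huS)
      linarith




noncomputable def Wsel (x : Fin n → ℝ) (m : ℕ) (hm : 1 ≤ m) (R : Finset (Fin n)) :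
    Finset (Fin n) :=
  if h : m ≤ R.card then (key x m R hm h).choose else R

lemma Wsel_subset (x : Fin n → ℝ) (m : ℕ) (hm : 1 ≤ m) (R : Finset (Fin n)) :
    Wsel x m hm R ⊆ R := by
  unfold Wsel
  split
  · exact (key x m R hm (by assumption)).choose_spec.1
  · exact subset_rfl

lemma Wsel_card (x : Fin n → ℝ) (m : ℕ) (hm : 1 ≤ m) {R : Finset (Fin n)}
    (h : m ≤ R.card) : m ≤ (Wsel x m hm R).card := by
  unfold Wsel
  rw [dif_pos h]
  exact (key x m R hm h).choose_spec.2.1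

lemma Wsel_good (x : Fin n → ℝ) (m : ℕ) (hm : 1 ≤ m) {R : Finset (Fin n)}
    (h : m ≤ R.card) :
    ∀ S : Finset (Fin n), S ⊆ R → m ≤ S.card → ∀ i0 ∈ S, i0 ∈ Wsel x m hm R →
      ∃ i ∈ S, i ∈ Wsel x m hm R ∧
        maxLoss (fun a b => |x a - x b|) i (Wsel x m hm R) ≤
          maxLoss (fun a b => |x a - x b|) i S := by
  unfold Wsel
  rw [dif_pos h]
  exact (key x m R hm h).choose_spec.2.2

noncomputable def Rseq (x : Fin n → ℝ) (m : ℕ) (hm : 1 ≤ m) : ℕ → Finset (Fin n)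
  | 0 => Finset.univ
  | t + 1 => Rseq x m hm t \ Wsel x m hm (Rseq x m hm t)

lemma Rseq_anti (x : Fin n → ℝ) (m : ℕ) (hm : 1 ≤ m) : Antitone (Rseq x m hm) :=
  antitone_nat_of_succ_le (fun t => Finset.sdiff_subset)

lemma Rseq_card (x : Fin n → ℝ) (m : ℕ) (hm : 1 ≤ m) :
    ∀ t : ℕ, (Rseq x m hm t).card + t * m ≤ n ∨ Rseq x m hm t = ∅ := by
  intro t
  induction t with
  | zero =>
    left
    simp [Rseq]
  | succ t ih =>
    rcases ih with h1 | h1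
    · by_cases hc : m ≤ (Rseq x m hm t).card
      · left
        have hsub := Wsel_subset x m hm (Rseq x m hm t)
        have hcd : (Rseq x m hm (t + 1)).card =
            (Rseq x m hm t).card - (Wsel x m hm (Rseq x m hm t)).card := by
          show ((Rseq x m hm t) \ _).card = _
          exact Finset.card_sdiff_of_subset hsub
        have hW := Wsel_card x m hm hc
        have hWle : (Wsel x m hm (Rseq x m hm t)).card ≤ (Rseq x m hm t).card :=
          Finset.card_le_card hsub
        have : (t + 1) * m = t * m + m := by ring
        omega
      · right
        show (Rseq x m hm t) \ _ = ∅
        rw [Wsel, dif_neg hc]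
        exact Finset.sdiff_self _
    · right
      show (Rseq x m hm t) \ _ = ∅
      rw [h1]
      simp

lemma Rseq_empty (x : Fin n → ℝ) (m : ℕ) (hm : 1 ≤ m) {k : ℕ} (hkm : n ≤ k * m) :
    Rseq x m hm k = ∅ := by
  rcases Rseq_card x m hm k with h | h
  · have : (Rseq x m hm k).card = 0 := by omega
    exact Finset.card_eq_zero.mp this
  · exact h

lemma not_mem_W_of_lt (x : Fin n → ℝ) (m : ℕ) (hm : 1 ≤ m) {s t : ℕ} (hst : s < t)
    {i : Fin n} (hi : i ∈ Wsel x m hm (Rseq x m hm t)) :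
    i ∉ Wsel x m hm (Rseq x m hm s) := by
  have h1 : i ∈ Rseq x m hm t := Wsel_subset x m hm _ hi
  have h2 : i ∈ Rseq x m hm (s + 1) := Rseq_anti x m hm hst h1
  have h3 : i ∈ Rseq x m hm s \ Wsel x m hm (Rseq x m hm s) := h2
  exact (Finset.mem_sdiff.mp h3).2

lemma W_unique (x : Fin n → ℝ) (m : ℕ) (hm : 1 ≤ m) {s t : ℕ} {i : Fin n}
    (hs : i ∈ Wsel x m hm (Rseq x m hm s)) (ht : i ∈ Wsel x m hm (Rseq x m hm t)) :
    s = t := by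
  rcases lt_trichotomy s t with h | h | h
  · exact absurd hs (not_mem_W_of_lt x m hm h ht)
  · exact h
  · exact absurd ht (not_mem_W_of_lt x m hm h hs)

lemma exists_step (x : Fin n → ℝ) (m : ℕ) (hm : 1 ≤ m) (i : Fin n) :
    ∀ N : ℕ, i ∉ Rseq x m hm N → ∃ t < N, i ∈ Wsel x m hm (Rseq x m hm t) := by
  intro N
  induction N with
  | zero => intro h; exact absurd (Finset.mem_univ i) h
  | succ N ih =>
    intro h
    by_cases hc : i ∈ Rseq x m hm N
    · refine ⟨N, Nat.lt_succ_self N, ?_⟩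
      by_contra hW
      exact h (Finset.mem_sdiff.mpr ⟨hc, hW⟩)
    · obtain ⟨t, ht, hW⟩ := ih hc
      exact ⟨t, lt_trans ht (Nat.lt_succ_self N), hW⟩

end Stmt14Aux

open Stmt14Aux

/-- On the real line (agents at positions `x i`, `d i j = |x i − x j|`), for any `k` with
`1 ≤ k ≤ n` there exists a `k`-clustering in the exact core for the maximum loss. -/
theorem stmt14 (n k : ℕ) (hk : 1 ≤ k) (hkn : k ≤ n) (x : Fin n → ℝ) :
    ∃ C : Fin n → Fin k, InCore 1 (maxLoss (fun i j => |x i - x j|)) C := by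
  have hn : 1 ≤ n := le_trans hk hkn
  set m : ℕ := ⌈(n : ℝ) / k⌉₊ with hmdef
  have hk0 : (0 : ℝ) < k := by exact_mod_cast hk
  have hm1 : 1 ≤ m := by
    rw [hmdef]
    refine Nat.ceil_pos.mpr ?_
    have hn0 : (0 : ℝ) < n := by exact_mod_cast hn
    positivity
  have hkm : n ≤ k * m := by
    have h1 : (n : ℝ) / k ≤ m := Nat.le_ceil _
    have h2 : (n : ℝ) ≤ k * m := by
      rw [div_le_iff₀ hk0] at h1
      linarith [h1]
    exact_mod_cast h2
  -- every agent is in some window before step k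
  have hex : ∀ i : Fin n, ∃ t, i ∈ Wsel x m hm1 (Rseq x m hm1 t) := by
    intro i
    have hi : i ∉ Rseq x m hm1 k := by
      rw [Rseq_empty x m hm1 hkm]
      exact Finset.notMem_empty i
    obtain ⟨t, _, ht⟩ := exists_step x m hm1 i k hi
    exact ⟨t, ht⟩
  have hlt : ∀ i : Fin n, Nat.find (hex i) < k := by
    intro i
    have hi : i ∉ Rseq x m hm1 k := by
      rw [Rseq_empty x m hm1 hkm]
      exact Finset.notMem_empty i
    obtain ⟨t, htk, ht⟩ := exists_step x m hm1 i k hi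
    exact lt_of_le_of_lt (Nat.find_le ht) htk
  refine ⟨fun i => ⟨Nat.find (hex i), hlt i⟩, ?_⟩
  set C : Fin n → Fin k := fun i => ⟨Nat.find (hex i), hlt i⟩ with hCdef
  have hfiber : ∀ i : Fin n,
      clusterOf C i = Wsel x m hm1 (Rseq x m hm1 (Nat.find (hex i))) := by
    intro i
    ext j
    simp only [clusterOf, Finset.mem_filter, Finset.mem_univ, true_and, hCdef,
      Fin.mk.injEq]
    constructor
    · intro hji
      have := Nat.find_spec (hex j)
      rwa [hji] at this
    · intro hj
      exact W_unique x m hm1 (Nat.find_spec (hex j)) hj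
  rintro ⟨S, hScard, hblock⟩
  have hScardm : m ≤ S.card := Nat.ceil_le.mpr hScard
  have hSne : S.Nonempty := Finset.card_pos.mp (lt_of_lt_of_le hm1 hScardm)
  obtain ⟨j0, hj0S⟩ := hSne
  have hexS : ∃ t, ∃ i ∈ S, i ∈ Wsel x m hm1 (Rseq x m hm1 t) :=
    ⟨Nat.find (hex j0), j0, hj0S, Nat.find_spec (hex j0)⟩
  set t0 : ℕ := Nat.find hexS with ht0def
  have hSsub : ∀ s ≤ t0, S ⊆ Rseq x m hm1 s := by
    intro s
    induction s with
    | zero => intro _ j hj; exact Finset.mem_univ j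
    | succ s ih =>
      intro hs j hj
      have hs' : s < t0 := lt_of_lt_of_le (Nat.lt_succ_self s) hs
      have hjR : j ∈ Rseq x m hm1 s := ih (le_of_lt hs') hj
      have hnW : j ∉ Wsel x m hm1 (Rseq x m hm1 s) := by
        intro hjW
        exact Nat.find_min hexS hs' ⟨j, hj, hjW⟩
      exact Finset.mem_sdiff.mpr ⟨hjR, hnW⟩
  have hSsub0 : S ⊆ Rseq x m hm1 t0 := hSsub t0 le_rfl
  have hcardR : m ≤ (Rseq x m hm1 t0).card :=
    le_trans hScardm (Finset.card_le_card hSsub0)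
  obtain ⟨i0, hi0S, hi0W⟩ := Nat.find_spec hexS
  obtain ⟨i, hiS, hiW, hle⟩ :=
    Wsel_good x m hm1 hcardR S hSsub0 hScardm i0 hi0S hi0W
  have hfind : Nat.find (hex i) = t0 := W_unique x m hm1 (Nat.find_spec (hex i)) hiW
  have hcl : clusterOf C i = Wsel x m hm1 (Rseq x m hm1 t0) := by
    rw [hfiber i, hfind]
  have hb := hblock i hiS
  rw [hcl, one_mul] at hb
  linarith
end
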